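/- arXiv:1108.3323 — 6 statements merged into one kernel-verified Lean document; each statement's English description precedes it below -/
import Mathlib

section
/- Let 𝓕 = {F_i}_{i∈I} be a factorization inverse system over a field F, with index partition I = I_v ⊔ I_e, and fix for each k ∈ I_e a labeling l_k, r_k of the two elements of I_v dominating k. Then the base-change functor β from the category of finite-dimensional F-vector spaces to the category of vector space patching problems for 𝓕 is an equivalence of categories if and only if simultaneous factorization holds over 𝓕, i.e. for every n ≥ 1 and every collection of matrices A_k ∈ GL_n(F_k) for k ∈ I_e there exist matrices A_i ∈ GL_n(F_i) for i ∈ I_v such that A_k = A_{r_k}^{-1} A_{l_k} in GL_n(F_k) for all k ∈ I_e. -/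
/-!
STATEMENT 0: Let 𝓕 = {F_i}_{i∈I} be a factorization inverse system over a field F, with
index partition I = I_v ⊔ I_e, and fix for each k ∈ I_e a labeling l_k, r_k of the two
elements of I_v dominating k.  Then the base-change functor β from the category of
finite-dimensional F-vector spaces to the category of vector space patching problems for
𝓕 is an equivalence of categories if and only if simultaneous factorization holds over
𝓕: for every n ≥ 1 and every collection A_k ∈ GL_n(F_k) (k ∈ I_e) there exist
A_i ∈ GL_n(F_i) (i ∈ I_v) such that A_k = A_{r_k}⁻¹ · A_{l_k} in GL_n(F_k) for all
k ∈ I_e.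
-/

universe u

/-- A *factorization inverse system* over a field `F`: a finite inverse system of fields
indexed by `I = Iv ⊔ Ie`, where each index `k ∈ Ie` is dominated by exactly the two
distinct indices `l k, r k ∈ Iv` (with fixed left/right labels), there are no other
relations, and whose inverse limit (in the category of rings) is `F`. -/
structure FactorizationInverseSystem (F : Type u) [Field F] : Type (u + 1) where
  /-- vertex indices -/
  Iv : Type
  /-- edge indices -/
  Ie : Type
  [finIv : Finite Iv]
  [finIe : Finite Ie]
  /-- the fields at the vertex indices -/
  Fv : Iv → Type u
  /-- the fields at the edge indices -/
  Fe : Ie → Type u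
  [fieldFv : ∀ i, Field (Fv i)]
  [fieldFe : ∀ k, Field (Fe k)]
  /-- the left vertex dominating an edge -/
  l : Ie → Iv
  /-- the right vertex dominating an edge -/
  r : Ie → Iv
  lr_ne : ∀ k, l k ≠ r k
  /-- the inclusion of the left vertex field into an edge field -/
  φl : ∀ k, Fv (l k) →+* Fe k
  /-- the inclusion of the right vertex field into an edge field -/
  φr : ∀ k, Fv (r k) →+* Fe k
  /-- the projections from the inverse limit `F` to the fields of the system -/
  ι : ∀ i, F →+* Fv i
  compat : ∀ k, (φl k).comp (ι (l k)) = (φr k).comp (ι (r k))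
  /-- `F` is the inverse limit of the system: every compatible family comes from a
  unique element of `F`. -/
  limit : ∀ x : ∀ i, Fv i, (∀ k, φl k (x (l k)) = φr k (x (r k))) →
    ∃! a : F, ∀ i, ι i a = x i

attribute [instance] FactorizationInverseSystem.finIv FactorizationInverseSystem.finIe
attribute [instance] FactorizationInverseSystem.fieldFv FactorizationInverseSystem.fieldFe

/-- Base change of a `K`-vector space `V` along a field embedding `φ : K →+* L`:
the tensor product `L ⊗_K V`, where `L` is regarded as a `K`-algebra via `φ`. -/
def bc {K L : Type u} [Field K] [Field L] (φ : K →+* L)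
    (V : Type u) [AddCommGroup V] [Module K V] : Type u :=
  letI := φ.toAlgebra
  TensorProduct K L V

noncomputable instance bc.instAddCommGroup {K L : Type u} [Field K] [Field L] (φ : K →+* L)
    (V : Type u) [AddCommGroup V] [Module K V] : AddCommGroup (bc φ V) :=
  letI := φ.toAlgebra
  (inferInstance : AddCommGroup (TensorProduct K L V))

noncomputable instance bc.instModule {K L : Type u} [Field K] [Field L] (φ : K →+* L)
    (V : Type u) [AddCommGroup V] [Module K V] : Module L (bc φ V) :=
  letI := φ.toAlgebra
  (inferInstance : Module L (TensorProduct K L V))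

noncomputable instance bc.instFiniteDimensional {K L : Type u} [Field K] [Field L]
    (φ : K →+* L) (V : Type u) [AddCommGroup V] [Module K V] [FiniteDimensional K V] :
    FiniteDimensional L (bc φ V) :=
  letI := φ.toAlgebra
  (inferInstance : Module.Finite L (TensorProduct K L V))

/-- Base change of a linear map along a field embedding. -/
noncomputable def bcMap {K L : Type u} [Field K] [Field L] (φ : K →+* L)
    {V W : Type u} [AddCommGroup V] [Module K V] [AddCommGroup W] [Module K W]
    (f : V →ₗ[K] W) : bc φ V →ₗ[L] bc φ W :=
  letI := φ.toAlgebra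
  LinearMap.baseChange L f

theorem bcMap_id {K L : Type u} [Field K] [Field L] (φ : K →+* L)
    {V : Type u} [AddCommGroup V] [Module K V] :
    bcMap φ (LinearMap.id : V →ₗ[K] V) = LinearMap.id := by
  letI := φ.toAlgebra
  exact LinearMap.baseChange_id

theorem bcMap_comp {K L : Type u} [Field K] [Field L] (φ : K →+* L)
    {V W U : Type u} [AddCommGroup V] [Module K V] [AddCommGroup W] [Module K W]
    [AddCommGroup U] [Module K U] (g : W →ₗ[K] U) (f : V →ₗ[K] W) :
    bcMap φ (g.comp f) = (bcMap φ g).comp (bcMap φ f) := by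
  letI := φ.toAlgebra
  exact LinearMap.baseChange_comp (f := f) (g := g) (A := L)

/-- Transport a base change along an equality of field embeddings. -/
noncomputable def bcCast {K L : Type u} [Field K] [Field L] {φ ψ : K →+* L} (V : Type u)
    [AddCommGroup V] [Module K V] (h : φ = ψ) : bc φ V ≃ₗ[L] bc ψ V := by
  subst h; exact LinearEquiv.refl L (bc φ V)

/-- The canonical isomorphism `L ⊗_K (K ⊗_F V) ≅ L ⊗_F V` of base changes along a
composite of field embeddings. -/
noncomputable def bcComp {F K L : Type u} [Field F] [Field K] [Field L]
    (ι : F →+* K) (φ : K →+* L) (V : Type u) [AddCommGroup V] [Module F V] :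
    bc φ (bc ι V) ≃ₗ[L] bc (φ.comp ι) V :=
  letI iFK : Algebra F K := ι.toAlgebra
  letI iKL : Algebra K L := φ.toAlgebra
  letI iFL : Algebra F L := (φ.comp ι).toAlgebra
  haveI : IsScalarTower F K L := IsScalarTower.of_algebraMap_eq (fun _ => rfl)
  TensorProduct.AlgebraTensorModule.cancelBaseChange F K L L V


theorem bcComp_naturality {F K L : Type u} [Field F] [Field K] [Field L]
    (ι : F →+* K) (φ : K →+* L) {V W : Type u} [AddCommGroup V] [Module F V]
    [AddCommGroup W] [Module F W] (f : V →ₗ[F] W) :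
    (bcMap (φ.comp ι) f).comp (bcComp ι φ V).toLinearMap =
      (bcComp ι φ W).toLinearMap.comp (bcMap φ (bcMap ι f)) := by
  letI iFK : Algebra F K := ι.toAlgebra
  letI iKL : Algebra K L := φ.toAlgebra
  letI iFL : Algebra F L := (φ.comp ι).toAlgebra
  haveI : IsScalarTower F K L := IsScalarTower.of_algebraMap_eq (fun _ => rfl)
  apply LinearMap.ext
  intro x
  induction x using TensorProduct.induction_on with
  | zero => exact (LinearMap.map_zero _).trans (LinearMap.map_zero _).symm
  | tmul c m =>
    induction m using TensorProduct.induction_on with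
    | zero =>
      erw [TensorProduct.tmul_zero]
      exact (LinearMap.map_zero _).trans (LinearMap.map_zero _).symm
    | tmul a v =>
      rfl
    | add p q hp hq =>
      erw [TensorProduct.tmul_add]
      exact ((LinearMap.map_add _ _ _).trans (congrArg₂ (· + ·) hp hq)).trans
        (LinearMap.map_add _ _ _).symm
  | add p q hp hq =>
    exact ((LinearMap.map_add _ _ _).trans (congrArg₂ (· + ·) hp hq)).trans
      (LinearMap.map_add _ _ _).symm

theorem bcCast_naturality {K L : Type u} [Field K] [Field L] {φ ψ : K →+* L} (h : φ = ψ)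
    {V W : Type u} [AddCommGroup V] [Module K V] [AddCommGroup W] [Module K W]
    (f : V →ₗ[K] W) :
    (bcMap ψ f).comp (bcCast V h).toLinearMap =
      (bcCast W h).toLinearMap.comp (bcMap φ f) := by
  subst h
  exact (LinearMap.comp_id _).trans (LinearMap.id_comp _).symm

open CategoryTheory

variable {F : Type u} [Field F]

/-- A vector space *patching problem* for a factorization inverse system `S` over `F`:
finite dimensional `F_i`-vector spaces for every index `i ∈ I = Iv ⊔ Ie`, together with
base-change isomorphisms `ν_{i,k} : V_i ⊗_{F_i} F_k ≅ V_k` for every relation `i ≻ k`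
of the system. -/
structure PatchingProblem (S : FactorizationInverseSystem F) : Type (u + 1) where
  Vv : ∀ i : S.Iv, Type u
  Ve : ∀ k : S.Ie, Type u
  [acgVv : ∀ i, AddCommGroup (Vv i)]
  [modVv : ∀ i, Module (S.Fv i) (Vv i)]
  [fdVv : ∀ i, FiniteDimensional (S.Fv i) (Vv i)]
  [acgVe : ∀ k, AddCommGroup (Ve k)]
  [modVe : ∀ k, Module (S.Fe k) (Ve k)]
  [fdVe : ∀ k, FiniteDimensional (S.Fe k) (Ve k)]
  νl : ∀ k : S.Ie, bc (S.φl k) (Vv (S.l k)) ≃ₗ[S.Fe k] Ve k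
  νr : ∀ k : S.Ie, bc (S.φr k) (Vv (S.r k)) ≃ₗ[S.Fe k] Ve k

attribute [instance] PatchingProblem.acgVv PatchingProblem.modVv PatchingProblem.fdVv
attribute [instance] PatchingProblem.acgVe PatchingProblem.modVe PatchingProblem.fdVe

/-- A morphism of patching problems: compatible families of linear maps. -/
@[ext]
structure PatchingProblemHom {S : FactorizationInverseSystem F}
    (X Y : PatchingProblem S) where
  fv : ∀ i : S.Iv, X.Vv i →ₗ[S.Fv i] Y.Vv i
  fe : ∀ k : S.Ie, X.Ve k →ₗ[S.Fe k] Y.Ve k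
  comm_l : ∀ k : S.Ie,
    (fe k).comp (X.νl k).toLinearMap =
      (Y.νl k).toLinearMap.comp (bcMap (S.φl k) (fv (S.l k)))
  comm_r : ∀ k : S.Ie,
    (fe k).comp (X.νr k).toLinearMap =
      (Y.νr k).toLinearMap.comp (bcMap (S.φr k) (fv (S.r k)))

/-- The category of vector space patching problems for `S`. -/
noncomputable instance PatchingProblem.category (S : FactorizationInverseSystem F) :
    Category (PatchingProblem S) where
  Hom X Y := PatchingProblemHom X Y
  id X :=
    { fv := fun _ => LinearMap.id
      fe := fun _ => LinearMap.id
      comm_l := fun k => by rw [bcMap_id, LinearMap.id_comp, LinearMap.comp_id]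
      comm_r := fun k => by rw [bcMap_id, LinearMap.id_comp, LinearMap.comp_id] }
  comp f g :=
    { fv := fun i => (g.fv i).comp (f.fv i)
      fe := fun k => (g.fe k).comp (f.fe k)
      comm_l := fun k => by
        rw [LinearMap.comp_assoc, f.comm_l k, ← LinearMap.comp_assoc, g.comm_l k,
          LinearMap.comp_assoc, ← bcMap_comp]
      comm_r := fun k => by
        rw [LinearMap.comp_assoc, f.comm_r k, ← LinearMap.comp_assoc, g.comm_r k,
          LinearMap.comp_assoc, ← bcMap_comp] }
  id_comp f := by
    apply PatchingProblemHom.ext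
    · funext i; exact LinearMap.comp_id _
    · funext k; exact LinearMap.comp_id _
  comp_id f := by
    apply PatchingProblemHom.ext
    · funext i; exact LinearMap.id_comp _
    · funext k; exact LinearMap.id_comp _
  assoc f g h := by
    apply PatchingProblemHom.ext
    · funext i; exact (LinearMap.comp_assoc _ _ _).symm
    · funext k; exact (LinearMap.comp_assoc _ _ _).symm

/-- The base change functor `β` from the category of finite dimensional `F`-vector
spaces to the category of vector space patching problems for `S`. -/
noncomputable def betaFunctor (S : FactorizationInverseSystem F) :
    FGModuleCat F ⥤ PatchingProblem S where
  obj V :=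
    { Vv := fun i => bc (S.ι i) V
      Ve := fun k => bc ((S.φl k).comp (S.ι (S.l k))) V
      νl := fun k => bcComp (S.ι (S.l k)) (S.φl k) V
      νr := fun k => (bcComp (S.ι (S.r k)) (S.φr k) V).trans (bcCast V (S.compat k).symm) }
  map {V W} f :=
    { fv := fun i => bcMap (S.ι i) f.hom.hom
      fe := fun k => bcMap ((S.φl k).comp (S.ι (S.l k))) f.hom.hom
      comm_l := fun k => bcComp_naturality (S.ι (S.l k)) (S.φl k) f.hom.hom
      comm_r := fun k => by
        apply LinearMap.ext
        intro x
        have h1 := LinearMap.congr_fun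
          (bcComp_naturality (S.ι (S.r k)) (S.φr k) f.hom.hom) x
        have h2 := LinearMap.congr_fun
          (bcCast_naturality (S.compat k).symm f.hom.hom)
          ((bcComp (S.ι (S.r k)) (S.φr k) V) x)
        simp only [LinearMap.comp_apply, LinearEquiv.coe_coe,
          LinearEquiv.coe_toLinearMap, LinearEquiv.trans_apply] at h1 h2 ⊢
        erw [h2, h1] }
  map_id V := by
    apply PatchingProblemHom.ext
    · funext i; exact bcMap_id _
    · funext k; exact bcMap_id _
  map_comp f g := by
    apply PatchingProblemHom.ext
    · funext i; exact bcMap_comp _ _ _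
    · funext k; exact bcMap_comp _ _ _

/-! ### Auxiliary infrastructure -/

section Bases

variable {K L : Type u} [Field K] [Field L]

/-- Base change of a basis along a field embedding. -/
noncomputable def basisBC (φ : K →+* L) {V : Type u} [AddCommGroup V] [Module K V]
    {η : Type*} (b : Module.Basis η K V) : Module.Basis η L (bc φ V) :=
  letI := φ.toAlgebra
  b.baseChange L

lemma basisBC_repr_bcMap (φ : K →+* L) {V W : Type u}
    [AddCommGroup V] [Module K V] [AddCommGroup W] [Module K W]
    {μ η : Type*} (b : Module.Basis μ K V) (c : Module.Basis η K W) (f : V →ₗ[K] W) (j : μ) (i : η) :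
    (basisBC φ c).repr (bcMap φ f (basisBC φ b j)) i = φ (c.repr (f (b j)) i) := by
  letI := φ.toAlgebra
  show (c.baseChange L).repr ((LinearMap.baseChange L f) (b.baseChange L j)) i = _
  rw [Module.Basis.baseChange_apply, LinearMap.baseChange_tmul, Module.Basis.baseChange_repr_tmul]
  simp [Algebra.smul_def]
  rfl

lemma toMatrix_bcMap (φ : K →+* L) {V W : Type u}
    [AddCommGroup V] [Module K V] [AddCommGroup W] [Module K W]
    {μ η : Type*} [Fintype μ] [Fintype η] [DecidableEq μ] [DecidableEq η]
    (b : Module.Basis μ K V) (c : Module.Basis η K W) (f : V →ₗ[K] W) :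
    LinearMap.toMatrix (basisBC φ b) (basisBC φ c) (bcMap φ f) =
      (LinearMap.toMatrix b c f).map φ := by
  ext i j
  rw [LinearMap.toMatrix_apply, basisBC_repr_bcMap, Matrix.map_apply, LinearMap.toMatrix_apply]

lemma bcComp_basisBC {F : Type u} [Field F] (ι : F →+* K) (φ : K →+* L)
    {V : Type u} [AddCommGroup V] [Module F V] {η : Type*} (b : Module.Basis η F V) (j : η) :
    bcComp ι φ V (basisBC φ (basisBC ι b) j) = basisBC (φ.comp ι) b j := by
  letI iFK : Algebra F K := ι.toAlgebra
  letI iKL : Algebra K L := φ.toAlgebra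
  letI iFL : Algebra F L := (φ.comp ι).toAlgebra
  haveI : IsScalarTower F K L := IsScalarTower.of_algebraMap_eq (fun _ => rfl)
  show TensorProduct.AlgebraTensorModule.cancelBaseChange F K L L V
      ((b.baseChange K).baseChange L j) = b.baseChange L j
  rw [Module.Basis.baseChange_apply, Module.Basis.baseChange_apply, Module.Basis.baseChange_apply]
  erw [TensorProduct.AlgebraTensorModule.cancelBaseChange_tmul]
  rw [one_smul]

lemma bcCast_basisBC {φ ψ : K →+* L} (h : φ = ψ) {V : Type u}
    [AddCommGroup V] [Module K V] {η : Type*} (b : Module.Basis η K V) (j : η) :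
    bcCast V h (basisBC φ b j) = basisBC ψ b j := by
  subst h; rfl

/-- A linear map carrying one basis to another elementwise has identity matrix. -/
lemma toMatrix_eq_one {R : Type*} [CommRing R] {V W : Type*}
    [AddCommGroup V] [Module R V] [AddCommGroup W] [Module R W]
    {η : Type*} [Fintype η] [DecidableEq η]
    (b : Module.Basis η R V) (c : Module.Basis η R W) (f : V →ₗ[R] W) (h : ∀ j, f (b j) = c j) :
    LinearMap.toMatrix b c f = 1 := by
  ext i j
  rw [LinearMap.toMatrix_apply, h, Module.Basis.repr_self, Matrix.one_apply]
  simp [Finsupp.single_apply, eq_comm]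

lemma finrank_bc (φ : K →+* L) (V : Type u) [AddCommGroup V] [Module K V]
    [FiniteDimensional K V] :
    Module.finrank L (bc φ V) = Module.finrank K V := by
  rw [Module.finrank_eq_card_basis (basisBC φ (Module.finBasis K V)),
    Module.finrank_eq_card_basis (Module.finBasis K V)]
  simp

end Bases
section Connectivity

variable (S : FactorizationInverseSystem F)

lemma FactorizationInverseSystem.iota_injective (i : S.Iv) : Function.Injective (S.ι i) :=
  (S.ι i).injective

lemma FactorizationInverseSystem.iv_nonempty : Nonempty S.Iv := by
  by_contra h
  rw [not_nonempty_iff] at h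
  haveI : IsEmpty S.Ie := ⟨fun k => h.false (S.l k)⟩
  obtain ⟨a, _, ha⟩ := S.limit (fun i => isEmptyElim i) (fun k => isEmptyElim k)
  have h01 : (0 : F) = (1 : F) := by
    rw [ha 0 (fun i => isEmptyElim i), ha 1 (fun i => isEmptyElim i)]
  exact zero_ne_one h01

/-- Any function on the vertex indices that is constant along edges is constant:
the "graph" of a factorization inverse system is connected. -/
lemma FactorizationInverseSystem.edge_const {β : Type*} (d : S.Iv → β)
    (h : ∀ k, d (S.l k) = d (S.r k)) (i j : S.Iv) : d i = d j := by
  classical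
  set x : ∀ i', S.Fv i' := fun i' => if d i' = d i then 1 else 0 with hx
  have hcomp : ∀ k, S.φl k (x (S.l k)) = S.φr k (x (S.r k)) := by
    intro k
    simp only [hx, h k]
    split <;> simp
  obtain ⟨a, ha, -⟩ := S.limit x hcomp
  by_contra hij
  have hxj : x j = 0 := by simp [hx]; exact fun hd => hij hd.symm
  have hxi : x i = 1 := by simp [hx]
  have ha0 : a = 0 := by
    have := ha j
    rw [hxj] at this
    exact (S.ι j).injective (by rw [this, map_zero])
  have := ha i
  rw [hxi, ha0, map_zero] at this
  exact zero_ne_one this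

end Connectivity
section Squares

variable {K L : Type u} [Field K] [Field L]

lemma bcMap_basisBC (φ : K →+* L) {V W : Type u}
    [AddCommGroup V] [Module K V] [AddCommGroup W] [Module K W] {η : Type*}
    (b : Module.Basis η K V) (c : Module.Basis η K W) (f : V →ₗ[K] W) (h : ∀ j, f (b j) = c j) (j : η) :
    bcMap φ f (basisBC φ b j) = basisBC φ c j := by
  letI := φ.toAlgebra
  show (LinearMap.baseChange L f) (b.baseChange L j) = c.baseChange L j
  rw [Module.Basis.baseChange_apply, LinearMap.baseChange_tmul, h, Module.Basis.baseChange_apply]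

/-- The matrix of a linear map in a commuting square over a base-change square. -/
lemma square_toMatrix (φ : K →+* L) {V W V' W' : Type u}
    [AddCommGroup V] [Module K V] [AddCommGroup W] [Module K W]
    [AddCommGroup V'] [Module L V'] [AddCommGroup W'] [Module L W']
    {μ η : Type*} [Fintype μ] [Fintype η] [DecidableEq μ] [DecidableEq η]
    (fv : V →ₗ[K] W) (fe : V' →ₗ[L] W')
    (νV : bc φ V ≃ₗ[L] V') (νW : bc φ W ≃ₗ[L] W')
    (b : Module.Basis μ K V) (c : Module.Basis η K W) (bV' : Module.Basis μ L V') (cW' : Module.Basis η L W')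
    (hV : ∀ j, νV (basisBC φ b j) = bV' j) (hW : ∀ j, νW (basisBC φ c j) = cW' j)
    (hsq : fe.comp νV.toLinearMap = νW.toLinearMap.comp (bcMap φ fv)) :
    LinearMap.toMatrix bV' cW' fe = (LinearMap.toMatrix b c fv).map φ := by
  have h1 := congrArg (LinearMap.toMatrix (basisBC φ b) cW') hsq
  rw [LinearMap.toMatrix_comp _ bV' _ fe νV.toLinearMap,
    LinearMap.toMatrix_comp _ (basisBC φ c) _ νW.toLinearMap (bcMap φ fv),
    toMatrix_eq_one _ _ _ hV, toMatrix_eq_one _ _ _ hW, Matrix.mul_one, Matrix.one_mul,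
    toMatrix_bcMap] at h1
  exact h1

/-- The inverse square of a commuting square of equivalences. -/
lemma square_symm (φ : K →+* L) {V W V' W' : Type u}
    [AddCommGroup V] [Module K V] [AddCommGroup W] [Module K W]
    [AddCommGroup V'] [Module L V'] [AddCommGroup W'] [Module L W']
    (fv : V ≃ₗ[K] W) (fe : V' ≃ₗ[L] W')
    (νV : bc φ V ≃ₗ[L] V') (νW : bc φ W ≃ₗ[L] W')
    (hsq : fe.toLinearMap.comp νV.toLinearMap =
      νW.toLinearMap.comp (bcMap φ fv.toLinearMap)) :
    fe.symm.toLinearMap.comp νW.toLinearMap =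
      νV.toLinearMap.comp (bcMap φ fv.symm.toLinearMap) := by
  have hfv : fv.toLinearMap.comp fv.symm.toLinearMap = LinearMap.id := by
    ext x; simp
  apply LinearMap.ext
  intro y
  have h1 : ∀ x, fe (νV x) = νW (bcMap φ fv.toLinearMap x) := fun x =>
    LinearMap.congr_fun hsq x
  have h2 : fe (νV (bcMap φ fv.symm.toLinearMap y)) = νW y := by
    rw [h1]
    congr 1
    rw [← LinearMap.comp_apply, ← bcMap_comp, hfv, bcMap_id, LinearMap.id_apply]
  simp only [LinearMap.comp_apply, LinearEquiv.coe_coe]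
  rw [← h2, LinearEquiv.symm_apply_apply]

end Squares
section Forward

/-- The linear automorphism of `Fin n → R` given by an invertible matrix. -/
noncomputable def glEquiv {R : Type u} [CommRing R] {n : ℕ}
    (U : Matrix.GeneralLinearGroup (Fin n) R) : (Fin n → R) ≃ₗ[R] (Fin n → R) :=
  (Matrix.GeneralLinearGroup.toLin U).toLinearEquiv

lemma glEquiv_apply {R : Type u} [CommRing R] {n : ℕ}
    (U : Matrix.GeneralLinearGroup (Fin n) R) (v : Fin n → R) :
    glEquiv U v = Matrix.mulVec (U : Matrix (Fin n) (Fin n) R) v := rfl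

lemma glEquiv_toMatrix {R : Type u} [CommRing R] {n : ℕ}
    (U : Matrix.GeneralLinearGroup (Fin n) R) :
    LinearMap.toMatrix (Pi.basisFun R (Fin n)) (Pi.basisFun R (Fin n))
      (glEquiv U).toLinearMap = (U : Matrix (Fin n) (Fin n) R) := by
  ext i j
  rw [LinearMap.toMatrix_apply]
  simp [glEquiv_apply, Matrix.mulVec_single]

variable (S : FactorizationInverseSystem F)

/-- The patching problem associated to a family of matrices on the edges. -/
noncomputable def PObj (n : ℕ)
    (A : ∀ k : S.Ie, Matrix.GeneralLinearGroup (Fin n) (S.Fe k)) :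
    PatchingProblem S where
  Vv i := Fin n → S.Fv i
  Ve k := Fin n → S.Fe k
  νl k := (Module.Basis.equiv (basisBC (S.φl k) (Pi.basisFun (S.Fv (S.l k)) (Fin n)))
      (Pi.basisFun (S.Fe k) (Fin n)) (Equiv.refl _)).trans (glEquiv (A k))
  νr k := Module.Basis.equiv (basisBC (S.φr k) (Pi.basisFun (S.Fv (S.r k)) (Fin n)))
      (Pi.basisFun (S.Fe k) (Fin n)) (Equiv.refl _)

set_option maxHeartbeats 1000000 in
lemma forward_factorization (hEq : (betaFunctor S).IsEquivalence)
    (n : ℕ) (A : ∀ k : S.Ie, Matrix.GeneralLinearGroup (Fin n) (S.Fe k)) :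
    ∃ B : ∀ i : S.Iv, Matrix.GeneralLinearGroup (Fin n) (S.Fv i),
      ∀ k : S.Ie,
        A k = (Units.map ((S.φr k).mapMatrix.toMonoidHom) (B (S.r k)))⁻¹ *
          Units.map ((S.φl k).mapMatrix.toMonoidHom) (B (S.l k)) := by
  haveI := hEq
  classical
  set P := PObj S n A with hP
  set V := (betaFunctor S).objPreimage P with hV
  set e := (betaFunctor S).objObjPreimageIso P with he
  obtain ⟨i₀⟩ := S.iv_nonempty
  have hcomp1 : ∀ i, (e.inv.fv i).comp (e.hom.fv i) = LinearMap.id := by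
    intro i
    exact congrFun (congrArg PatchingProblemHom.fv e.hom_inv_id) i
  have hcomp2 : ∀ i, (e.hom.fv i).comp (e.inv.fv i) = LinearMap.id := by
    intro i
    exact congrFun (congrArg PatchingProblemHom.fv e.inv_hom_id) i
  -- the dimension of V is n
  have hfr : Module.finrank F V = n := by
    have h1 : Module.finrank (S.Fv i₀) (bc (S.ι i₀) (V : Type u)) = Module.finrank F V :=
      finrank_bc _ _
    have h2 := (LinearEquiv.ofLinear (e.hom.fv i₀) (e.inv.fv i₀)
      (hcomp2 i₀) (hcomp1 i₀) :
        bc (S.ι i₀) (V : Type u) ≃ₗ[S.Fv i₀] (Fin n → S.Fv i₀)).finrank_eq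
    rw [h1] at h2
    rw [h2]
    exact Module.finrank_fin_fun _
  set b : Module.Basis (Fin n) F V := Module.finBasisOfFinrankEq F V hfr with hb
  set M' : ∀ i, Matrix (Fin n) (Fin n) (S.Fv i) := fun i =>
    LinearMap.toMatrix (Pi.basisFun (S.Fv i) (Fin n)) (basisBC (S.ι i) b)
      (e.inv.fv i) with hM'
  set Mh : ∀ i, Matrix (Fin n) (Fin n) (S.Fv i) := fun i =>
    LinearMap.toMatrix (basisBC (S.ι i) b) (Pi.basisFun (S.Fv i) (Fin n))
      (e.hom.fv i) with hMh
  have hBmul1 : ∀ i, M' i * Mh i = 1 := by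
    intro i
    erw [hM', hMh, ← LinearMap.toMatrix_comp _ (Pi.basisFun (S.Fv i) (Fin n)),
      hcomp1 i, LinearMap.toMatrix_id]
  have hBmul2 : ∀ i, Mh i * M' i = 1 := by
    intro i
    erw [hM', hMh, ← LinearMap.toMatrix_comp _ (basisBC (S.ι i) b),
      hcomp2 i, LinearMap.toMatrix_id]
  refine ⟨fun i => ⟨M' i, Mh i, hBmul1 i, hBmul2 i⟩, fun k => ?_⟩
  -- matrix of the edge component of e.inv
  set E : Matrix (Fin n) (Fin n) (S.Fe k) :=
    LinearMap.toMatrix (Pi.basisFun (S.Fe k) (Fin n))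
      (basisBC ((S.φl k).comp (S.ι (S.l k))) b) (e.inv.fe k) with hE
  -- matrix of P.νl k
  have hPνl : LinearMap.toMatrix
      (basisBC (S.φl k) (Pi.basisFun (S.Fv (S.l k)) (Fin n)))
      (Pi.basisFun (S.Fe k) (Fin n)) (P.νl k).toLinearMap
        = (A k : Matrix (Fin n) (Fin n) (S.Fe k)) := by
    have : (P.νl k).toLinearMap = (glEquiv (A k)).toLinearMap.comp
        (Module.Basis.equiv (basisBC (S.φl k) (Pi.basisFun (S.Fv (S.l k)) (Fin n)))
          (Pi.basisFun (S.Fe k) (Fin n)) (Equiv.refl _)).toLinearMap := rfl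
    rw [this, LinearMap.toMatrix_comp _ (Pi.basisFun (S.Fe k) (Fin n)),
      glEquiv_toMatrix, toMatrix_eq_one _ _ _ (fun j => Module.Basis.equiv_apply _ _ _ _),
      Matrix.mul_one]
  have hPνr : LinearMap.toMatrix
      (basisBC (S.φr k) (Pi.basisFun (S.Fv (S.r k)) (Fin n)))
      (Pi.basisFun (S.Fe k) (Fin n)) (P.νr k).toLinearMap = 1 :=
    toMatrix_eq_one _ _ _ (fun j => Module.Basis.equiv_apply _ _ _ _)
  -- left square
  have hsql : (e.inv.fe k).comp ((P.νl k).toLinearMap) =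
      (bcComp (S.ι (S.l k)) (S.φl k) (V : Type u)).toLinearMap.comp
        (bcMap (S.φl k) (e.inv.fv (S.l k))) := e.inv.comm_l k
  have h1 := congrArg (LinearMap.toMatrix
      (basisBC (S.φl k) (Pi.basisFun (S.Fv (S.l k)) (Fin n)))
      (basisBC ((S.φl k).comp (S.ι (S.l k))) b)) hsql
  erw [LinearMap.toMatrix_comp _ (Pi.basisFun (S.Fe k) (Fin n)), hPνl,
    LinearMap.toMatrix_comp _ (basisBC (S.φl k) (basisBC (S.ι (S.l k)) b)),
    toMatrix_eq_one _ _ _ (fun j => bcComp_basisBC (S.ι (S.l k)) (S.φl k) b j)] at h1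
  rw [Matrix.one_mul] at h1
  replace h1 := h1.trans (toMatrix_bcMap (S.φl k) (Pi.basisFun (S.Fv (S.l k)) (Fin n))
    (basisBC (S.ι (S.l k)) b) (e.inv.fv (S.l k)))
  -- right square
  have hsqr : (e.inv.fe k).comp ((P.νr k).toLinearMap) =
      ((bcComp (S.ι (S.r k)) (S.φr k) (V : Type u)).trans
        (bcCast (V : Type u) (S.compat k).symm)).toLinearMap.comp
          (bcMap (S.φr k) (e.inv.fv (S.r k))) := e.inv.comm_r k
  have hβνr : ∀ j, ((bcComp (S.ι (S.r k)) (S.φr k) (V : Type u)).trans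
      (bcCast (V : Type u) (S.compat k).symm))
      (basisBC (S.φr k) (basisBC (S.ι (S.r k)) b) j)
        = basisBC ((S.φl k).comp (S.ι (S.l k))) b j := fun j => by
    rw [LinearEquiv.trans_apply, bcComp_basisBC, bcCast_basisBC]
  have h2 := congrArg (LinearMap.toMatrix
      (basisBC (S.φr k) (Pi.basisFun (S.Fv (S.r k)) (Fin n)))
      (basisBC ((S.φl k).comp (S.ι (S.l k))) b)) hsqr
  erw [LinearMap.toMatrix_comp _ (Pi.basisFun (S.Fe k) (Fin n)), hPνr] at h2
  rw [Matrix.mul_one] at h2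
  replace h2 := h2.trans ((LinearMap.toMatrix_comp _
    (basisBC (S.φr k) (basisBC (S.ι (S.r k)) b)) _ _ _).trans (by
      rw [toMatrix_eq_one _ _ _ hβνr, Matrix.one_mul]))
  replace h2 := h2.trans (toMatrix_bcMap (S.φr k) (Pi.basisFun (S.Fv (S.r k)) (Fin n))
    (basisBC (S.ι (S.r k)) b) (e.inv.fv (S.r k)))
  -- combine
  have key : (M' (S.r k)).map (S.φr k) * (A k : Matrix (Fin n) (Fin n) (S.Fe k))
      = (M' (S.l k)).map (S.φl k) := by
    rw [← h2]; exact h1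
  have hval : (A k : Matrix (Fin n) (Fin n) (S.Fe k))
      = (Mh (S.r k)).map (S.φr k) * (M' (S.l k)).map (S.φl k) := by
    calc (A k : Matrix (Fin n) (Fin n) (S.Fe k))
        = ((Mh (S.r k)).map (S.φr k) * (M' (S.r k)).map (S.φr k)) *
            (A k : Matrix (Fin n) (Fin n) (S.Fe k)) := by
          rw [← Matrix.map_mul, hBmul2, Matrix.map_one _ (map_zero _) (map_one _),
            Matrix.one_mul]
      _ = (Mh (S.r k)).map (S.φr k) *
            ((M' (S.r k)).map (S.φr k) *
              (A k : Matrix (Fin n) (Fin n) (S.Fe k))) := by rw [Matrix.mul_assoc]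
      _ = (Mh (S.r k)).map (S.φr k) * (M' (S.l k)).map (S.φl k) := by rw [key]
  apply Units.ext
  rw [Units.val_mul]
  show (A k : Matrix (Fin n) (Fin n) (S.Fe k)) =
    ((S.φr k).mapMatrix (Mh (S.r k))) * ((S.φl k).mapMatrix (M' (S.l k)))
  rw [RingHom.mapMatrix_apply, RingHom.mapMatrix_apply]
  exact hval

end Forward
section Backward

variable (S : FactorizationInverseSystem F)

lemma beta_faithful : (betaFunctor S).Faithful := by
  obtain ⟨i₀⟩ := S.iv_nonempty
  constructor
  intro V W f g hfg
  have h1 : bcMap (S.ι i₀) f.hom.hom = bcMap (S.ι i₀) g.hom.hom :=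
    congrFun (congrArg PatchingProblemHom.fv hfg) i₀
  set b := Module.finBasis F (V : Type u)
  set c := Module.finBasis F (W : Type u)
  have h2 := congrArg (LinearMap.toMatrix (basisBC (S.ι i₀) b) (basisBC (S.ι i₀) c)) h1
  rw [toMatrix_bcMap, toMatrix_bcMap] at h2
  have h3 : LinearMap.toMatrix b c f.hom.hom =
      LinearMap.toMatrix b c g.hom.hom := by
    ext p q
    exact (S.ι i₀).injective (by
      have := congrFun (congrFun h2 p) q
      simpa [Matrix.map_apply] using this)
  exact FGModuleCat.hom_ext ((LinearMap.toMatrix b c).injective h3)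

lemma beta_full : (betaFunctor S).Full := by
  constructor
  intro V W m
  classical
  set b := Module.finBasis F (V : Type u) with hbdef
  set c := Module.finBasis F (W : Type u) with hcdef
  set M : ∀ i, Matrix (Fin (Module.finrank F (W : Type u)))
      (Fin (Module.finrank F (V : Type u))) (S.Fv i) := fun i =>
    LinearMap.toMatrix (basisBC (S.ι i) b) (basisBC (S.ι i) c) (m.fv i) with hM
  -- edge compatibility of the matrices
  have hedge : ∀ k, (M (S.l k)).map (S.φl k) = (M (S.r k)).map (S.φr k) := by
    intro k
    have hL := square_toMatrix (S.φl k) (m.fv (S.l k)) (m.fe k)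
      (bcComp (S.ι (S.l k)) (S.φl k) (V : Type u))
      (bcComp (S.ι (S.l k)) (S.φl k) (W : Type u))
      (basisBC (S.ι (S.l k)) b) (basisBC (S.ι (S.l k)) c)
      (basisBC ((S.φl k).comp (S.ι (S.l k))) b) (basisBC ((S.φl k).comp (S.ι (S.l k))) c)
      (fun j => bcComp_basisBC _ _ _ _) (fun j => bcComp_basisBC _ _ _ _)
      (m.comm_l k)
    have hR := square_toMatrix (S.φr k) (m.fv (S.r k)) (m.fe k)
      ((bcComp (S.ι (S.r k)) (S.φr k) (V : Type u)).trans
        (bcCast (V : Type u) (S.compat k).symm))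
      ((bcComp (S.ι (S.r k)) (S.φr k) (W : Type u)).trans
        (bcCast (W : Type u) (S.compat k).symm))
      (basisBC (S.ι (S.r k)) b) (basisBC (S.ι (S.r k)) c)
      (basisBC ((S.φl k).comp (S.ι (S.l k))) b) (basisBC ((S.φl k).comp (S.ι (S.l k))) c)
      (fun j => by
        erw [LinearEquiv.trans_apply]
        exact (congrArg (bcCast ((V : Type u)) (S.compat k).symm)
          (bcComp_basisBC (S.ι (S.r k)) (S.φr k) b j)).trans
            (bcCast_basisBC (S.compat k).symm b j))
      (fun j => by
        erw [LinearEquiv.trans_apply]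
        exact (congrArg (bcCast ((W : Type u)) (S.compat k).symm)
          (bcComp_basisBC (S.ι (S.r k)) (S.φr k) c j)).trans
            (bcCast_basisBC (S.compat k).symm c j))
      (m.comm_r k)
    simp only [hM]
    exact hL.symm.trans hR
  -- patch the entries by the inverse limit property
  have hlim : ∀ p q, ∃ a : F, ∀ i, S.ι i a = M i p q := by
    intro p q
    obtain ⟨a, ha, -⟩ := S.limit (fun i => M i p q) (fun k => by
      have h1 := congrFun (congrFun (hedge k) p) q
      simpa [Matrix.map_apply] using h1)
    exact ⟨a, ha⟩
  choose N hN using hlim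
  set f : (V : Type u) →ₗ[F] W := Matrix.toLin b c (Matrix.of N) with hf
  refine ⟨FGModuleCat.ofHom f, ?_⟩
  have hfv : ∀ i, bcMap (S.ι i) f = m.fv i := by
    intro i
    apply (LinearMap.toMatrix (basisBC (S.ι i) b) (basisBC (S.ι i) c)).injective
    rw [toMatrix_bcMap]
    rw [hf, LinearMap.toMatrix_toLin]
    ext p q
    rw [Matrix.map_apply, Matrix.of_apply, hN p q i]
  apply PatchingProblemHom.ext
  · funext i
    exact hfv i
  · funext k
    -- both edge maps fit in the same commuting square with an invertible left leg
    have h1 := m.comm_l k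
    have h2 := ((betaFunctor S).map (FGModuleCat.ofHom f)).comm_l k
    have h3 : ((betaFunctor S).map (FGModuleCat.ofHom f)).fv (S.l k) = m.fv (S.l k) := hfv (S.l k)
    rw [h3] at h2
    have h4 : (m.fe k).comp ((((betaFunctor S).obj V).νl k).toLinearMap) =
        (((betaFunctor S).map (FGModuleCat.ofHom f)).fe k).comp ((((betaFunctor S).obj V).νl k).toLinearMap) := by
      rw [h1, h2]
    have h5 := congrArg (fun (g : _ →ₗ[S.Fe k] _) =>
      g.comp ((((betaFunctor S).obj V).νl k).symm.toLinearMap)) h4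
    simpa [LinearMap.comp_assoc, LinearEquiv.comp_coe, LinearEquiv.self_trans_symm] using h5.symm
  
end Backward
section EssSurj

variable {K L : Type u} [Field K] [Field L]

lemma basisBC_map (φ : K →+* L) {V : Type u} [AddCommGroup V] [Module K V]
    {η : Type*} (b : Module.Basis η K V) (e : V ≃ₗ[K] V) (j : η) :
    basisBC φ (b.map e) j = bcMap φ e.toLinearMap (basisBC φ b j) := by
  letI := φ.toAlgebra
  show (b.map e).baseChange L j = (LinearMap.baseChange L e.toLinearMap) (b.baseChange L j)
  rw [Module.Basis.baseChange_apply, Module.Basis.baseChange_apply, Module.Basis.map_apply,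
    LinearMap.baseChange_tmul]
  rfl

variable (S : FactorizationInverseSystem F)

set_option maxHeartbeats 1000000 in
lemma beta_essSurj
    (hfact : ∀ n : ℕ, 1 ≤ n →
      ∀ A : ∀ k : S.Ie, Matrix.GeneralLinearGroup (Fin n) (S.Fe k),
        ∃ B : ∀ i : S.Iv, Matrix.GeneralLinearGroup (Fin n) (S.Fv i),
          ∀ k : S.Ie,
            A k = (Units.map ((S.φr k).mapMatrix.toMonoidHom) (B (S.r k)))⁻¹ *
              Units.map ((S.φl k).mapMatrix.toMonoidHom) (B (S.l k))) :
    (betaFunctor S).EssSurj := by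
  constructor
  intro X
  classical
  obtain ⟨i₀⟩ := S.iv_nonempty
  set n := Module.finrank (S.Fv i₀) (X.Vv i₀) with hn
  have hd : ∀ i, Module.finrank (S.Fv i) (X.Vv i) = n := by
    intro i
    exact S.edge_const (fun i => Module.finrank (S.Fv i) (X.Vv i)) (fun k =>
      (((X.νl k).symm.finrank_eq).trans (finrank_bc _ _)).symm.trans
        (((X.νr k).symm.finrank_eq).trans (finrank_bc _ _))) i i₀
  set bv : ∀ i, Module.Basis (Fin n) (S.Fv i) (X.Vv i) :=
    fun i => Module.finBasisOfFinrankEq (S.Fv i) (X.Vv i) (hd i) with hbv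
  set ll : ∀ k, Module.Basis (Fin n) (S.Fe k) (X.Ve k) :=
    fun k => (basisBC (S.φl k) (bv (S.l k))).map (X.νl k) with hll
  set rr : ∀ k, Module.Basis (Fin n) (S.Fe k) (X.Ve k) :=
    fun k => (basisBC (S.φr k) (bv (S.r k))).map (X.νr k) with hrr
  set A : ∀ k, Matrix.GeneralLinearGroup (Fin n) (S.Fe k) :=
    fun k => ⟨(rr k).toMatrix (ll k), (ll k).toMatrix (rr k),
      Module.Basis.toMatrix_mul_toMatrix_flip _ _, Module.Basis.toMatrix_mul_toMatrix_flip _ _⟩ with hA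
  obtain ⟨B, hB⟩ : ∃ B : ∀ i : S.Iv, Matrix.GeneralLinearGroup (Fin n) (S.Fv i),
      ∀ k : S.Ie,
        A k = (Units.map ((S.φr k).mapMatrix.toMonoidHom) (B (S.r k)))⁻¹ *
          Units.map ((S.φl k).mapMatrix.toMonoidHom) (B (S.l k)) := by
    rcases Nat.eq_zero_or_pos n with h0 | h1
    · refine ⟨fun _ => 1, fun k => Units.ext ?_⟩
      haveI : IsEmpty (Fin n) := by rw [h0]; infer_instance
      ext p q
      exact isEmptyElim p
    · exact hfact n h1 A
  -- factorization identity at matrix level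
  have hkey : ∀ k,
      (((B (S.l k))⁻¹ : Matrix.GeneralLinearGroup (Fin n) (S.Fv (S.l k))) :
        Matrix (Fin n) (Fin n) (S.Fv (S.l k))).map (S.φl k)
      = (ll k).toMatrix (rr k) *
        (((B (S.r k))⁻¹ : Matrix.GeneralLinearGroup (Fin n) (S.Fv (S.r k))) :
          Matrix (Fin n) (Fin n) (S.Fv (S.r k))).map (S.φr k) := by
    intro k
    have hu : (A k)⁻¹ * (Units.map ((S.φr k).mapMatrix.toMonoidHom) (B (S.r k)))⁻¹
        = (Units.map ((S.φl k).mapMatrix.toMonoidHom) (B (S.l k)))⁻¹ := by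
      rw [hB k]; group
    have hv := congrArg Units.val hu
    rw [Units.val_mul, Units.coe_map_inv, Units.coe_map_inv] at hv
    have hAinv : ((A k)⁻¹ : Matrix.GeneralLinearGroup (Fin n) (S.Fe k)).val
        = (ll k).toMatrix (rr k) := rfl
    rw [hAinv] at hv
    exact hv.symm
  -- modified vertex bases
  set ev : ∀ i, X.Vv i ≃ₗ[S.Fv i] X.Vv i :=
    fun i => (bv i).equivFun.trans ((glEquiv ((B i)⁻¹)).trans (bv i).equivFun.symm) with hev
  set bv' : ∀ i, Module.Basis (Fin n) (S.Fv i) (X.Vv i) := fun i => (bv i).map (ev i) with hbv'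
  have hToM : ∀ i, LinearMap.toMatrix (bv i) (bv i) (ev i).toLinearMap
      = (((B i)⁻¹ : Matrix.GeneralLinearGroup (Fin n) (S.Fv i)) :
          Matrix (Fin n) (Fin n) (S.Fv i)) := by
    intro i
    ext s j
    rw [LinearMap.toMatrix_apply]
    have h1 : (ev i).toLinearMap ((bv i) j)
        = (bv i).equivFun.symm (glEquiv ((B i)⁻¹) ((bv i).equivFun (bv i j))) := rfl
    rw [h1, ← Module.Basis.equivFun_apply, LinearEquiv.apply_symm_apply]
    simp [glEquiv_apply, Matrix.mulVec, dotProduct, Module.Basis.equivFun_self, Finsupp.single_apply]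
  -- matrices of the two edge comparison maps
  have hLmat : ∀ k, LinearMap.toMatrix (basisBC (S.φl k) (bv (S.l k))) (ll k)
      ((X.νl k).toLinearMap.comp (bcMap (S.φl k) (ev (S.l k)).toLinearMap))
      = (((B (S.l k))⁻¹ : Matrix.GeneralLinearGroup (Fin n) (S.Fv (S.l k))) :
          Matrix (Fin n) (Fin n) (S.Fv (S.l k))).map (S.φl k) := by
    intro k
    rw [LinearMap.toMatrix_comp _ (basisBC (S.φl k) (bv (S.l k))),
      toMatrix_eq_one _ (ll k) _ (fun j => (Module.Basis.map_apply _ _ _).symm),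
      Matrix.one_mul, toMatrix_bcMap, hToM]
  have hRmat : ∀ k, LinearMap.toMatrix (basisBC (S.φr k) (bv (S.r k))) (rr k)
      ((X.νr k).toLinearMap.comp (bcMap (S.φr k) (ev (S.r k)).toLinearMap))
      = (((B (S.r k))⁻¹ : Matrix.GeneralLinearGroup (Fin n) (S.Fv (S.r k))) :
          Matrix (Fin n) (Fin n) (S.Fv (S.r k))).map (S.φr k) := by
    intro k
    rw [LinearMap.toMatrix_comp _ (basisBC (S.φr k) (bv (S.r k))),
      toMatrix_eq_one _ (rr k) _ (fun j => (Module.Basis.map_apply _ _ _).symm),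
      Matrix.one_mul, toMatrix_bcMap, hToM]
  have hRmat' : ∀ k, LinearMap.toMatrix (basisBC (S.φr k) (bv (S.r k))) (ll k)
      ((X.νr k).toLinearMap.comp (bcMap (S.φr k) (ev (S.r k)).toLinearMap))
      = (ll k).toMatrix (rr k) *
        (((B (S.r k))⁻¹ : Matrix.GeneralLinearGroup (Fin n) (S.Fv (S.r k))) :
          Matrix (Fin n) (Fin n) (S.Fv (S.r k))).map (S.φr k) := by
    intro k
    have h0 : (X.νr k).toLinearMap.comp (bcMap (S.φr k) (ev (S.r k)).toLinearMap)
        = LinearMap.id.comp ((X.νr k).toLinearMap.comp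
          (bcMap (S.φr k) (ev (S.r k)).toLinearMap)) := (LinearMap.id_comp _).symm
    rw [h0, LinearMap.toMatrix_comp _ (rr k), LinearMap.toMatrix_id_eq_basis_toMatrix,
      hRmat k]
  -- the patching condition for the modified bases
  have hpatch : ∀ k (j : Fin n),
      (X.νl k).toLinearMap (basisBC (S.φl k) (bv' (S.l k)) j)
        = (X.νr k).toLinearMap (basisBC (S.φr k) (bv' (S.r k)) j) := by
    intro k j
    apply (ll k).repr.injective
    ext s
    have e1 : (X.νl k).toLinearMap (basisBC (S.φl k) (bv' (S.l k)) j)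
        = ((X.νl k).toLinearMap.comp (bcMap (S.φl k) (ev (S.l k)).toLinearMap))
            (basisBC (S.φl k) (bv (S.l k)) j) := by
      rw [LinearMap.comp_apply]
      rw [hbv', basisBC_map]
    have e2 : (X.νr k).toLinearMap (basisBC (S.φr k) (bv' (S.r k)) j)
        = ((X.νr k).toLinearMap.comp (bcMap (S.φr k) (ev (S.r k)).toLinearMap))
            (basisBC (S.φr k) (bv (S.r k)) j) := by
      rw [LinearMap.comp_apply]
      rw [hbv', basisBC_map]
    rw [e1, e2, ← LinearMap.toMatrix_apply, ← LinearMap.toMatrix_apply,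
      hLmat k, hRmat' k, hkey k]
  -- construct the preimage and the isomorphism
  set bF : Module.Basis (Fin n) F (Fin n → F) := Pi.basisFun F (Fin n) with hbF
  set gv : ∀ i, bc (S.ι i) (Fin n → F) ≃ₗ[S.Fv i] X.Vv i :=
    fun i => Module.Basis.equiv (basisBC (S.ι i) bF) (bv' i) (Equiv.refl _) with hgv
  set ge : ∀ k, bc ((S.φl k).comp (S.ι (S.l k))) (Fin n → F) ≃ₗ[S.Fe k] X.Ve k :=
    fun k => Module.Basis.equiv (basisBC ((S.φl k).comp (S.ι (S.l k))) bF)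
      ((basisBC (S.φl k) (bv' (S.l k))).map (X.νl k)) (Equiv.refl _) with hge
  have hcl : ∀ k, (ge k).toLinearMap.comp
      (bcComp (S.ι (S.l k)) (S.φl k) (Fin n → F)).toLinearMap
      = (X.νl k).toLinearMap.comp (bcMap (S.φl k) (gv (S.l k)).toLinearMap) := by
    intro k
    apply (basisBC (S.φl k) (basisBC (S.ι (S.l k)) bF)).ext
    intro j
    rw [LinearMap.comp_apply, LinearMap.comp_apply]
    have h1 : (bcComp (S.ι (S.l k)) (S.φl k) (Fin n → F)).toLinearMap
        (basisBC (S.φl k) (basisBC (S.ι (S.l k)) bF) j)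
        = basisBC ((S.φl k).comp (S.ι (S.l k))) bF j := bcComp_basisBC _ _ _ _
    have h2 : bcMap (S.φl k) (gv (S.l k)).toLinearMap
        (basisBC (S.φl k) (basisBC (S.ι (S.l k)) bF) j)
        = basisBC (S.φl k) (bv' (S.l k)) j :=
      bcMap_basisBC _ _ _ _ (fun j' => Module.Basis.equiv_apply _ _ _ _) j
    rw [h1, h2]
    have h3 : (ge k).toLinearMap (basisBC ((S.φl k).comp (S.ι (S.l k))) bF j)
        = ((basisBC (S.φl k) (bv' (S.l k))).map (X.νl k)) ((Equiv.refl (Fin n)) j) :=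
      Module.Basis.equiv_apply _ _ _ _
    rw [h3]
    show ((basisBC (S.φl k) (bv' (S.l k))).map (X.νl k)) j = X.νl k _
    rw [Module.Basis.map_apply]
  have hcr : ∀ k, (ge k).toLinearMap.comp
      ((bcComp (S.ι (S.r k)) (S.φr k) (Fin n → F)).trans
        (bcCast (Fin n → F) (S.compat k).symm)).toLinearMap
      = (X.νr k).toLinearMap.comp (bcMap (S.φr k) (gv (S.r k)).toLinearMap) := by
    intro k
    apply (basisBC (S.φr k) (basisBC (S.ι (S.r k)) bF)).ext
    intro j
    rw [LinearMap.comp_apply, LinearMap.comp_apply]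
    have h1 : ((bcComp (S.ι (S.r k)) (S.φr k) (Fin n → F)).trans
        (bcCast (Fin n → F) (S.compat k).symm)).toLinearMap
        (basisBC (S.φr k) (basisBC (S.ι (S.r k)) bF) j)
        = basisBC ((S.φl k).comp (S.ι (S.l k))) bF j := by
      rw [LinearEquiv.coe_coe, LinearEquiv.trans_apply]
      exact (congrArg (bcCast (Fin n → F) (S.compat k).symm)
        (bcComp_basisBC (S.ι (S.r k)) (S.φr k) bF j)).trans
          (bcCast_basisBC (S.compat k).symm bF j)
    have h2 : bcMap (S.φr k) (gv (S.r k)).toLinearMap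
        (basisBC (S.φr k) (basisBC (S.ι (S.r k)) bF) j)
        = basisBC (S.φr k) (bv' (S.r k)) j :=
      bcMap_basisBC _ _ _ _ (fun j' => Module.Basis.equiv_apply _ _ _ _) j
    rw [h1, h2, ← hpatch k j]
    have h3 : (ge k).toLinearMap (basisBC ((S.φl k).comp (S.ι (S.l k))) bF j)
        = ((basisBC (S.φl k) (bv' (S.l k))).map (X.νl k)) ((Equiv.refl (Fin n)) j) :=
      Module.Basis.equiv_apply _ _ _ _
    rw [h3]
    show ((basisBC (S.φl k) (bv' (S.l k))).map (X.νl k)) j = X.νl k _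
    rw [Module.Basis.map_apply]
  refine ⟨FGModuleCat.of F (Fin n → F), ⟨?_⟩⟩
  refine
    { hom :=
        { fv := fun i => (gv i).toLinearMap
          fe := fun k => (ge k).toLinearMap
          comm_l := hcl
          comm_r := hcr }
      inv :=
        { fv := fun i => (gv i).symm.toLinearMap
          fe := fun k => (ge k).symm.toLinearMap
          comm_l := fun k => square_symm (S.φl k) (gv (S.l k)) (ge k) _ _ (hcl k)
          comm_r := fun k => square_symm (S.φr k) (gv (S.r k)) (ge k) _ _ (hcr k) }
      hom_inv_id := ?_
      inv_hom_id := ?_ }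
  · apply PatchingProblemHom.ext
    · funext i
      show (gv i).symm.toLinearMap.comp (gv i).toLinearMap = LinearMap.id
      ext x; simp
    · funext k
      show (ge k).symm.toLinearMap.comp (ge k).toLinearMap = LinearMap.id
      ext x; simp
  · apply PatchingProblemHom.ext
    · funext i
      show (gv i).toLinearMap.comp (gv i).symm.toLinearMap = LinearMap.id
      ext x; simp
    · funext k
      show (ge k).toLinearMap.comp (ge k).symm.toLinearMap = LinearMap.id
      ext x; simp

end EssSurj
/-- THEOREM (Proposition `factn_equiv_of_cats`): `β` is an equivalence of categories if
and only if simultaneous factorization holds over the system: for every `n ≥ 1` and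
every collection of matrices `A_k ∈ GLₙ(F_k)` (k ∈ Ie), there exist matrices
`B_i ∈ GLₙ(F_i)` (i ∈ Iv) with `A_k = B_{r k}⁻¹ * B_{l k}` in `GLₙ(F_k)` for all
`k ∈ Ie` (the matrices being mapped into `GLₙ(F_k)` via the inclusions `φl k, φr k`). -/
theorem stmt_0 (S : FactorizationInverseSystem F) :
    (betaFunctor S).IsEquivalence ↔
    (∀ n : ℕ, 1 ≤ n →
      ∀ A : ∀ k : S.Ie, Matrix.GeneralLinearGroup (Fin n) (S.Fe k),
        ∃ B : ∀ i : S.Iv, Matrix.GeneralLinearGroup (Fin n) (S.Fv i),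
          ∀ k : S.Ie,
            A k = (Units.map ((S.φr k).mapMatrix.toMonoidHom) (B (S.r k)))⁻¹ *
              Units.map ((S.φl k).mapMatrix.toMonoidHom) (B (S.l k))) := by
  constructor
  · intro hEq n _ A
    exact forward_factorization S hEq n A
  · intro hfact
    exact ⟨beta_faithful S, beta_full S, beta_essSurj S hfact⟩
end

section
/- Let {F_i}_{i∈I} be a factorization inverse system over a field F and let Z be a scheme over F. Suppose given, for every i ∈ I, a point Q_i ∈ Z(F_i) such that whenever i ≻ j (i.e. F_i ⊆ F_j), the image of Q_i under the natural map Z(F_i) → Z(F_j) equals Q_j. Then there exists a unique F-point Q ∈ Z(F) whose image in Z(F_i) is Q_i for every i ∈ I. -/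
universe u

/-!
STATEMENT 2: Let {F_i}_{i∈I} be a factorization inverse system over a field F and let Z
be a scheme over F.  Suppose given, for every i ∈ I, a point Q_i ∈ Z(F_i) such that
whenever F_i ⊆ F_j, the image of Q_i under Z(F_i) → Z(F_j) equals Q_j.  Then there exists
a unique F-point Q ∈ Z(F) whose image in Z(F_i) is Q_i for every i ∈ I.

An E-point of the F-scheme (Z, z : Z ⟶ Spec F) is a morphism Spec E ⟶ Z over Spec F; the
only inclusions in the system are F_{l k}, F_{r k} ⊆ F_k (for k ∈ Ie) and the structural
inclusions of F.
-/

open AlgebraicGeometry CategoryTheory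

theorem stmt_2 {F : Type u} [Field F] (S : FactorizationInverseSystem F)
    (Z : Scheme.{u}) (z : Z ⟶ Spec (CommRingCat.of F))
    -- the points Q_i ∈ Z(F_i), for i ∈ I = Iv ⊔ Ie:
    (Qv : ∀ i : S.Iv, Spec (CommRingCat.of (S.Fv i)) ⟶ Z)
    (Qe : ∀ k : S.Ie, Spec (CommRingCat.of (S.Fe k)) ⟶ Z)
    (hQv : ∀ i, Qv i ≫ z = Spec.map (CommRingCat.ofHom (S.ι i)))
    (hQe : ∀ k, Qe k ≫ z = Spec.map (CommRingCat.ofHom ((S.φl k).comp (S.ι (S.l k)))))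
    -- compatibility: for i ≻ k the image of Q_i in Z(F_k) is Q_k
    (hl : ∀ k, Spec.map (CommRingCat.ofHom (S.φl k)) ≫ Qv (S.l k) = Qe k)
    (hr : ∀ k, Spec.map (CommRingCat.ofHom (S.φr k)) ≫ Qv (S.r k) = Qe k) :
    -- there is a unique F-point of Z inducing all the Q_i
    ∃! Q : Spec (CommRingCat.of F) ⟶ Z,
      Q ≫ z = 𝟙 (Spec (CommRingCat.of F)) ∧
      (∀ i, Spec.map (CommRingCat.ofHom (S.ι i)) ≫ Q = Qv i) ∧
      (∀ k, Spec.map (CommRingCat.ofHom ((S.φl k).comp (S.ι (S.l k)))) ≫ Q = Qe k) := by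
  classical
  -- Injectivity of the family of projections, from the limit property.
  have inj : ∀ b b' : F, (∀ i, S.ι i b = S.ι i b') → b = b' := by
    intro b b' h
    obtain ⟨a, ha, hu⟩ := S.limit (fun i => S.ι i b')
      (fun k => RingHom.congr_fun (S.compat k) b')
    exact (hu b h).trans (hu b' (fun i => rfl)).symm
  -- The vertex index set is nonempty.
  have hne : Nonempty S.Iv := by
    by_contra h
    rw [not_nonempty_iff] at h
    exact zero_ne_one (inj 0 1 (fun i => h.elim i))
  obtain ⟨i0⟩ := hne
  -- The graph is connected.
  have conn : ∀ j, Relation.EqvGen (fun i j => ∃ k, S.l k = i ∧ S.r k = j) i0 j := by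
    intro j
    by_contra hj
    set rel : S.Iv → S.Iv → Prop := fun i j => ∃ k, S.l k = i ∧ S.r k = j with hreldef
    have hcompat : ∀ k, S.φl k ((if Relation.EqvGen rel i0 (S.l k) then 1 else 0 : S.Fv (S.l k)))
        = S.φr k ((if Relation.EqvGen rel i0 (S.r k) then 1 else 0 : S.Fv (S.r k))) := by
      intro k
      have hiff : Relation.EqvGen rel i0 (S.l k) ↔ Relation.EqvGen rel i0 (S.r k) :=
        ⟨fun h => h.trans _ _ _ (Relation.EqvGen.rel _ _ ⟨k, rfl, rfl⟩),
         fun h => h.trans _ _ _ ((Relation.EqvGen.rel _ _ ⟨k, rfl, rfl⟩).symm _ _)⟩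
      by_cases h : Relation.EqvGen rel i0 (S.l k)
      · rw [if_pos h, if_pos (hiff.mp h), map_one, map_one]
      · rw [if_neg h, if_neg (fun h' => h (hiff.mpr h')), map_zero, map_zero]
    obtain ⟨a, ha, -⟩ := S.limit (fun m => if Relation.EqvGen rel i0 m then 1 else 0) hcompat
    have h1 : S.ι i0 a = 1 := by rw [ha i0, if_pos (Relation.EqvGen.refl i0)]
    have h0 : S.ι j a = 0 := by rw [ha j, if_neg hj]
    have hsq : a * (a - 1) = 0 := by
      apply (S.ι i0).injective
      rw [map_mul, map_sub, map_one, map_zero, h1]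
      ring
    rcases mul_eq_zero.mp hsq with h | h
    · rw [h, map_zero] at h1; exact zero_ne_one h1
    · have : a = 1 := by linear_combination h
      rw [this, map_one] at h0; exact one_ne_zero h0
  -- Decompose the vertex points through their residue fields.
  set pt : S.Iv → Z := fun i => (Qv i).base (IsLocalRing.closedPoint (S.Fv i)) with hptdef
  set f : ∀ i, Z.residueField (pt i) ⟶ CommRingCat.of (S.Fv i) :=
    fun i => Z.descResidueField (Scheme.stalkClosedPointTo (Qv i)) with hfdef
  have hQvi : ∀ i, Spec.map (f i) ≫ Z.fromSpecResidueField (pt i) = Qv i :=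
    fun i => Scheme.descResidueField_stalkClosedPointTo_fromSpecResidueField _ Z (Qv i)
  -- points agree along edges
  have hedge : ∀ k, pt (S.l k) = pt (S.r k) := by
    intro k
    have h1 : pt (S.l k) = (Qe k).base (IsLocalRing.closedPoint (S.Fe k)) := by
      rw [hptdef, ← hl k]
      exact congrArg (Qv (S.l k)).base (Subsingleton.elim _ _)
    have h2 : pt (S.r k) = (Qe k).base (IsLocalRing.closedPoint (S.Fe k)) := by
      rw [hptdef, ← hr k]
      exact congrArg (Qv (S.r k)).base (Subsingleton.elim _ _)
    rw [h1, h2]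
  -- hence all the points agree
  have hconst : ∀ j, pt j = pt i0 := by
    intro j
    have key : ∀ a b, Relation.EqvGen (fun i j => ∃ k, S.l k = i ∧ S.r k = j) a b →
        pt a = pt b := by
      intro a b h
      induction h with
      | rel u v huv => obtain ⟨k, rfl, rfl⟩ := huv; exact hedge k
      | refl u => rfl
      | symm u v _ ih => exact ih.symm
      | trans u v w _ _ ih1 ih2 => exact ih1.trans ih2
    exact (key _ _ (conn j)).symm
  set x : Z := pt i0 with hx
  set g : ∀ i, Z.residueField x ⟶ CommRingCat.of (S.Fv i) :=
    fun i => (Z.residueFieldCongr (hconst i).symm).hom ≫ f i with hgdef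
  have hQv' : ∀ i, Spec.map (g i) ≫ Z.fromSpecResidueField x = Qv i := by
    intro i
    rw [hgdef, Spec.map_comp, Category.assoc,
      Scheme.residueFieldCongr_fromSpecResidueField]
    exact hQvi i
  -- the residue maps agree along edges
  have hcomp : ∀ k, g (S.l k) ≫ CommRingCat.ofHom (S.φl k)
      = g (S.r k) ≫ CommRingCat.ofHom (S.φr k) := by
    intro k
    have h := (hl k).trans (hr k).symm
    rw [← hQv' (S.l k), ← hQv' (S.r k), ← Category.assoc, ← Category.assoc,
      ← Spec.map_comp, ← Spec.map_comp] at h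
    exact Spec.map_injective ((cancel_mono _).mp h)
  -- build the residue map into F
  have exq : ∀ t : Z.residueField x, ∃! a : F, ∀ i, S.ι i a = g i t := by
    intro t
    refine S.limit (fun i => g i t) (fun k => ?_)
    simpa using ConcreteCategory.congr_hom (hcomp k) t
  set q : Z.residueField x → F := fun t => (exq t).choose with hqdef
  have hqi : ∀ t i, S.ι i (q t) = g i t := fun t => (exq t).choose_spec.1
  have hqu : ∀ (t) (b : F), (∀ i, S.ι i b = g i t) → b = q t := fun t => (exq t).choose_spec.2
  set Q0 : Z.residueField x →+* F :=
    { toFun := q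
      map_one' := by
        refine (hqu 1 1 (fun i => ?_)).symm
        rw [map_one, map_one]
      map_mul' := fun s t => by
        refine (hqu _ (q s * q t) (fun i => ?_)).symm
        rw [map_mul, hqi, hqi, ← map_mul]
      map_zero' := by
        refine (hqu 0 0 (fun i => ?_)).symm
        rw [map_zero, map_zero]
      map_add' := fun s t => by
        refine (hqu _ (q s + q t) (fun i => ?_)).symm
        rw [map_add, hqi, hqi, ← map_add] } with hQ0def
  have hgQ0 : ∀ i, CommRingCat.ofHom Q0 ≫ CommRingCat.ofHom (S.ι i) = g i := by
    intro i
    ext t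
    exact hqi t i
  set Q : Spec (CommRingCat.of F) ⟶ Z :=
    Spec.map (CommRingCat.ofHom Q0) ≫ Z.fromSpecResidueField x with hQdef
  have htri : ∀ i, Spec.map (CommRingCat.ofHom (S.ι i)) ≫ Q = Qv i := by
    intro i
    rw [hQdef, ← Category.assoc, ← Spec.map_comp, hgQ0 i, hQv' i]
  have htrie : ∀ k,
      Spec.map (CommRingCat.ofHom ((S.φl k).comp (S.ι (S.l k)))) ≫ Q = Qe k := by
    intro k
    have hco : CommRingCat.ofHom ((S.φl k).comp (S.ι (S.l k)))
        = CommRingCat.ofHom (S.ι (S.l k)) ≫ CommRingCat.ofHom (S.φl k) := rfl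
    rw [hco, Spec.map_comp, Category.assoc, htri (S.l k), hl k]
  have hz1 : Q ≫ z = 𝟙 (Spec (CommRingCat.of F)) := by
    have hpre : Spec.map (Spec.preimage (Q ≫ z)) = Q ≫ z := Spec.map_preimage _
    have key : ∀ i (a : F), S.ι i (Spec.preimage (Q ≫ z) a) = S.ι i a := by
      intro i a
      have hmap : Spec.map (Spec.preimage (Q ≫ z) ≫ CommRingCat.ofHom (S.ι i))
          = Spec.map (CommRingCat.ofHom (S.ι i)) := by
        rw [Spec.map_comp, hpre, ← Category.assoc, htri i, hQv i]
      have := Spec.map_injective hmap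
      simpa using ConcreteCategory.congr_hom this a
    have hid : Spec.preimage (Q ≫ z) = 𝟙 (CommRingCat.of F) := by
      ext a
      exact inj _ _ (fun i => key i a)
    rw [← hpre, hid, Spec.map_id]
  refine ⟨Q, ⟨hz1, htri, htrie⟩, ?_⟩
  -- uniqueness
  rintro Q' ⟨hz', hv', -⟩
  have hdec := Scheme.descResidueField_stalkClosedPointTo_fromSpecResidueField F Z Q'
  set y : Z := Q'.base (IsLocalRing.closedPoint F) with hy
  set g' : Z.residueField y ⟶ CommRingCat.of F :=
    Z.descResidueField (Scheme.stalkClosedPointTo Q') with hg'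
  have ey : y = x := by
    show Q'.base (IsLocalRing.closedPoint F) = (Qv i0).base (IsLocalRing.closedPoint (S.Fv i0))
    rw [← hv' i0]
    exact congrArg Q'.base (Subsingleton.elim _ _)
  have hgi : ∀ i, g' ≫ CommRingCat.ofHom (S.ι i) = (Z.residueFieldCongr ey).hom ≫ g i := by
    intro i
    apply Spec.map_injective
    rw [← cancel_mono (Z.fromSpecResidueField y)]
    rw [Spec.map_comp, Spec.map_comp, Category.assoc, Category.assoc, hdec,
      Scheme.residueFieldCongr_fromSpecResidueField, hQv' i, hv' i]
  have hg'Q0 : g' = (Z.residueFieldCongr ey).hom ≫ CommRingCat.ofHom Q0 := by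
    ext t
    show g' t = q ((Z.residueFieldCongr ey).hom t)
    refine hqu _ _ (fun i => ?_)
    simpa using ConcreteCategory.congr_hom (hgi i) t
  have hmc : Spec.map ((Z.residueFieldCongr ey).hom ≫ CommRingCat.ofHom Q0)
      = Spec.map (CommRingCat.ofHom Q0) ≫ Spec.map (Z.residueFieldCongr ey).hom := Spec.map_comp _ _
  rw [← show Spec.map g' ≫ Z.fromSpecResidueField y = Q' from hdec, hg'Q0, hmc, Category.assoc,
    Scheme.residueFieldCongr_fromSpecResidueField]
end

section
/- Let R be a local domain that is not a field and is complete with respect to the adic topology of its maximal ideal, and let v be a discrete valuation on the fraction field of R. Then R is contained in the valuation ring of v; that is, v(r) ≥ 0 for every nonzero r ∈ R. -/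
/-!
STATEMENT 3: Let R be a local domain that is not a field and is complete with respect
to the adic topology of its maximal ideal, and let v be a discrete valuation on the
fraction field of R.  Then R is contained in the valuation ring of v; that is,
v(r) ≥ 0 for every nonzero r ∈ R.

A discrete valuation on a field F is a valuation whose value group is isomorphic to ℤ
(in particular it is nontrivial).  We model it as a valuation with values in
`ℤₘ₀ = WithZero (Multiplicative ℤ)` that is surjective; its valuation ring is
`v.integer = {a | v a ≤ 1}` (the multiplicative counterpart of `v(a) ≥ 0`).
-/

theorem stmt_3 (R : Type*) [CommRing R] [IsDomain R] [IsLocalRing R]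
    (hR : ¬ IsField R)
    [IsAdicComplete (IsLocalRing.maximalIdeal R) R]
    (v : Valuation (FractionRing R) (WithZero (Multiplicative ℤ)))
    (hv : Function.Surjective v) :
    ∀ r : R, r ≠ 0 → algebraMap R (FractionRing R) r ∈ v.integer := by
  classical
  intro r hr
  by_contra hcon
  rw [Valuation.mem_integer_iff, not_le] at hcon
  set K := FractionRing R
  set φ : R →+* K := algebraMap R K with hφ
  have hinj : Function.Injective φ := IsFractionRing.injective R K
  -- a nonzero element of the maximal ideal
  have hmne : IsLocalRing.maximalIdeal R ≠ ⊥ := by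
    intro h
    exact hR (IsLocalRing.isField_iff_maximalIdeal_eq.mpr h)
  obtain ⟨s, hs, hs0⟩ := (Submodule.ne_bot_iff _).mp hmne
  -- valuations of x = φ r and y = φ s
  have hx0 : v (φ r) ≠ 0 := v.ne_zero_iff.mpr (fun h => hr (hinj (by simpa using h)))
  have hy0 : v (φ s) ≠ 0 := v.ne_zero_iff.mpr (fun h => hs0 (hinj (by simpa using h)))
  set a : Multiplicative ℤ := WithZero.unzero hx0 with ha
  set b : Multiplicative ℤ := WithZero.unzero hy0 with hb
  have hxa : v (φ r) = (a : WithZero (Multiplicative ℤ)) := (WithZero.coe_unzero hx0).symm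
  have hyb : v (φ s) = (b : WithZero (Multiplicative ℤ)) := (WithZero.coe_unzero hy0).symm
  set k : ℤ := Multiplicative.toAdd a with hk
  set d : ℤ := Multiplicative.toAdd b with hd
  have hkpos : 0 < k := by
    rw [hxa] at hcon
    rw [hk]
    have : (1 : Multiplicative ℤ) < a := by
      rwa [← WithZero.coe_one, WithZero.coe_lt_coe] at hcon
    exact this
  -- choose n so that d + n * k > 0
  set n : ℕ := (1 - d).toNat + 1 with hn
  have hDpos : 0 < d + (n : ℤ) * k := by
    have h1 : (1 - d : ℤ) ≤ (n : ℤ) := by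
      rw [hn]; push_cast; omega
    have hn0 : (0 : ℤ) ≤ (n : ℤ) := Int.natCast_nonneg _
    have h2 : (n : ℤ) * 1 ≤ (n : ℤ) * k := mul_le_mul_of_nonneg_left (by omega) hn0
    linarith
  set D : ℤ := d + (n : ℤ) * k with hD
  -- the element u = 1 + s * r ^ n
  set u : R := 1 + s * r ^ n with hu
  have hsrn : s * r ^ n ∈ IsLocalRing.maximalIdeal R := Ideal.mul_mem_right _ _ hs
  -- value of φ u
  have hval_srn : v (φ (s * r ^ n)) = ((b * a ^ n : Multiplicative ℤ) : WithZero (Multiplicative ℤ)) := by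
    rw [map_mul, map_pow, map_mul, map_pow, hxa, hyb]
    push_cast
    ring
  have hgt1 : (1 : WithZero (Multiplicative ℤ)) < v (φ (s * r ^ n)) := by
    rw [hval_srn, ← WithZero.coe_one, WithZero.coe_lt_coe]
    change (0 : ℤ) < Multiplicative.toAdd (b * a ^ n)
    rw [toAdd_mul, toAdd_pow]
    simpa using hDpos
  have hvu : v (φ u) = ((b * a ^ n : Multiplicative ℤ) : WithZero (Multiplicative ℤ)) := by
    rw [hu, map_add, map_one]
    rw [← hval_srn]
    have := v.map_add_eq_of_lt_right (x := (1 : K)) (y := φ (s * r ^ n)) (by simpa using hgt1)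
    simpa using this
  -- u is nonzero
  have hu0 : u ≠ 0 := by
    intro h
    have : s * (-(r ^ n)) = 1 := by
      have := h
      rw [hu] at this
      linear_combination -this
    have hus : IsUnit s := IsUnit.of_mul_eq_one _ this
    exact (IsLocalRing.mem_maximalIdeal s).mp hs hus
  -- pick a prime q > D that is a unit in R
  obtain ⟨q₁, hq₁ge, hq₁p⟩ := Nat.exists_infinite_primes (D.toNat + 2)
  obtain ⟨q₂, hq₂ge, hq₂p⟩ := Nat.exists_infinite_primes (q₁ + 1)
  have hqne : q₁ ≠ q₂ := by omega
  have hexists : ∃ q : ℕ, q.Prime ∧ D < (q : ℤ) ∧ IsUnit (q : R) := by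
    by_contra h
    push_neg at h
    have h1 : ¬ IsUnit ((q₁ : ℕ) : R) := h q₁ hq₁p (by omega)
    have h2 : ¬ IsUnit ((q₂ : ℕ) : R) := h q₂ hq₂p (by omega)
    have hm1 : ((q₁ : ℕ) : R) ∈ IsLocalRing.maximalIdeal R := h1
    have hm2 : ((q₂ : ℕ) : R) ∈ IsLocalRing.maximalIdeal R := h2
    have hcop : IsCoprime ((q₁ : ℤ)) ((q₂ : ℤ)) :=
      Nat.isCoprime_iff_coprime.mpr ((Nat.coprime_primes hq₁p hq₂p).mpr hqne)
    have hcopR : IsCoprime ((q₁ : ℕ) : R) ((q₂ : ℕ) : R) := by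
      have := hcop.map (Int.castRingHom R)
      simpa using this
    obtain ⟨c1, c2, hc⟩ := hcopR
    have : (1 : R) ∈ IsLocalRing.maximalIdeal R := by
      rw [← hc]
      exact Ideal.add_mem _ (Ideal.mul_mem_left _ _ hm1) (Ideal.mul_mem_left _ _ hm2)
    exact (IsLocalRing.maximalIdeal.isMaximal R).ne_top (Ideal.eq_top_of_isUnit_mem _ this isUnit_one)
  obtain ⟨q, hqp, hqD, hqu⟩ := hexists
  -- Hensel: find a q-th root of u
  have hqnz : q ≠ 0 := hqp.ne_zero
  set f : Polynomial R := Polynomial.X ^ q - Polynomial.C u with hf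
  have hfm : f.Monic := Polynomial.monic_X_pow_sub_C u hqnz
  have hev : f.eval 1 ∈ IsLocalRing.maximalIdeal R := by
    have : f.eval 1 = -(s * r ^ n) := by
      simp [hf, hu]
    rw [this]
    exact neg_mem hsrn
  have hder : IsUnit (Ideal.Quotient.mk (IsLocalRing.maximalIdeal R) (f.derivative.eval 1)) := by
    have : f.derivative.eval 1 = (q : R) := by
      simp [hf, Polynomial.derivative_X_pow]
    rw [this]
    exact hqu.map _
  obtain ⟨w, hw, -⟩ := HenselianRing.is_henselian (I := IsLocalRing.maximalIdeal R) f hfm 1 hev hder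
  have hwq : w ^ q = u := by
    have := hw
    rw [Polynomial.IsRoot, hf, Polynomial.eval_sub, Polynomial.eval_pow, Polynomial.eval_X,
      Polynomial.eval_C, sub_eq_zero] at this
    exact this
  -- take valuations
  have hvwq : (v (φ w)) ^ q = v (φ u) := by
    rw [← map_pow, ← map_pow, hwq]
  have hw0 : v (φ w) ≠ 0 := by
    intro h
    rw [h] at hvwq
    rw [hvu] at hvwq
    simp [zero_pow hqnz] at hvwq
  set e : ℤ := Multiplicative.toAdd (WithZero.unzero hw0) with he
  have hkey : (q : ℤ) * e = D := by
    have h1 : ((WithZero.unzero hw0 : Multiplicative ℤ) ^ q : Multiplicative ℤ)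
        = b * a ^ n := by
      have : ((WithZero.unzero hw0 ^ q : Multiplicative ℤ) : WithZero (Multiplicative ℤ))
          = ((b * a ^ n : Multiplicative ℤ) : WithZero (Multiplicative ℤ)) := by
        rw [WithZero.coe_pow, WithZero.coe_unzero, hvwq, hvu]
      exact_mod_cast WithZero.coe_inj.mp this
    have := congrArg Multiplicative.toAdd h1
    rw [toAdd_pow, toAdd_mul, toAdd_pow] at this
    simp only [nsmul_eq_mul, smul_eq_mul] at this
    rw [hD, hk, hd, he]
    linarith [this]
  rcases le_or_gt e 0 with h | h
  · nlinarith
  · nlinarith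
end

section
/- Let F be a field that contains a complete discrete valuation ring T as a subring, and let v be any discrete valuation on F. Then the valuation ring of v contains T. -/
set_option synthInstance.maxHeartbeats 400000

open Polynomial Multiplicative

/-- Helper: any element of the maximal ideal of `T` whose value is `ofAdd n` with `0 < n`
gives a contradiction, by Henselian descent using `X^2 - X - a`. -/
private lemma descent (F : Type*) [Field F] (T : Subring F)
    [IsDiscreteValuationRing T]
    [IsAdicComplete (IsLocalRing.maximalIdeal T) T]
    (v : Valuation F (WithZero (Multiplicative ℤ))) :
    ∀ n : ℕ, ∀ a : T, a ∈ IsLocalRing.maximalIdeal T →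
      v (a : F) = ((ofAdd (n : ℤ) : Multiplicative ℤ) : WithZero (Multiplicative ℤ)) →
      0 < n → False := by
  intro n
  induction n using Nat.strong_induction_on with
  | _ n ih =>
    intro a ha hva hn
    -- Hensel's lemma for f = X^2 - X - C a at a₀ = 0
    have hjac : HenselianRing T (IsLocalRing.maximalIdeal T) := inferInstance
    set f : T[X] := X ^ 2 - X - C a with hf
    have hmonic : f.Monic := by
      unfold f
      monicity!
    have heval : f.eval 0 ∈ IsLocalRing.maximalIdeal T := by
      simp only [f, eval_sub, eval_pow, eval_X, eval_C, ne_eq, OfNat.ofNat_ne_zero,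
        not_false_eq_true, zero_pow, zero_sub, sub_zero]
      simpa using (IsLocalRing.maximalIdeal T).neg_mem ha
    have hderiv : IsUnit (Ideal.Quotient.mk (IsLocalRing.maximalIdeal T)
        (f.derivative.eval 0)) := by
      have : f.derivative.eval 0 = -1 := by
        simp [f, derivative_sub, derivative_X_pow]
      rw [this]
      exact (isUnit_one.neg : IsUnit (-1 : T)).map (Ideal.Quotient.mk _)
    obtain ⟨r, hroot, hrm⟩ := hjac.is_henselian f hmonic 0 heval hderiv
    rw [sub_zero] at hrm
    -- r^2 - r - a = 0 in T, hence in F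
    have hrF : (r : F) * ((r : F) - 1) = (a : F) := by
      have h0 : (r : T) ^ 2 - r - a = 0 := by simpa [f] using hroot
      have h2 : ((r : F)) ^ 2 - (r : F) - (a : F) = 0 := by
        have := congrArg (fun x : T => (x : F)) h0
        push_cast at this
        simpa using this
      ring_nf
      ring_nf at h2
      linear_combination h2
    have hvprod : v ((r : F)) * v ((r : F) - 1) = v ((a : F)) := by
      rw [← Valuation.map_mul, hrF]
    have hva1 : (1 : WithZero (Multiplicative ℤ)) < v ((a : F)) := by
      rw [hva]
      rw [show (1 : WithZero (Multiplicative ℤ)) = ((1 : Multiplicative ℤ) : WithZero _) by rfl]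
      rw [WithZero.coe_lt_coe]
      rw [show (1 : Multiplicative ℤ) = ofAdd (0 : ℤ) by rfl, Multiplicative.ofAdd_lt]
      exact_mod_cast hn
    -- show v r = v (r - 1) and both > 1
    have hkey : 1 < v ((r : F)) ∧ v ((r : F)) * v ((r : F)) = v ((a : F)) := by
      rcases le_or_gt (v ((r : F))) 1 with h1 | h1
      · rcases le_or_gt (v ((r : F) - 1)) 1 with h2 | h2
        · exfalso
          have := mul_le_one' h1 h2
          rw [hvprod] at this
          exact absurd hva1 (not_lt_of_ge this)
        · -- v (r - 1) > 1 = v 1, so v r = v ((r-1) + 1) = v (r-1)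
          have : v ((r : F)) = v ((r : F) - 1) := by
            have := Valuation.map_add_eq_of_lt_left v
              (show v ((1 : F)) < v ((r : F) - 1) by rwa [v.map_one])
            rw [sub_add_cancel] at this
            exact this
          rw [this] at h1
          exact absurd h2 (not_lt_of_ge h1)
      · have h2 : v ((r : F) - 1) = v ((r : F)) := by
          have := Valuation.map_sub_eq_of_lt_left v
            (show v ((1 : F)) < v ((r : F)) by rwa [v.map_one])
          exact this
        refine ⟨h1, ?_⟩
        rw [← hvprod, h2]
    obtain ⟨hr1, hr2⟩ := hkey
    -- v r = ofAdd m for some m with 2m = n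
    have hrne : v ((r : F)) ≠ 0 := ne_of_gt (lt_trans zero_lt_one hr1)
    obtain ⟨u, hu⟩ := WithZero.ne_zero_iff_exists.mp hrne
    have hupos : 0 < u.toAdd := by
      rw [← hu] at hr1
      rw [show (1 : WithZero (Multiplicative ℤ)) = ((1 : Multiplicative ℤ) : WithZero _) by rfl,
        WithZero.coe_lt_coe] at hr1
      have := Multiplicative.toAdd_lt.mpr hr1
      simpa using this
    have h2m : u.toAdd + u.toAdd = (n : ℤ) := by
      rw [← hu, hva] at hr2
      rw [← WithZero.coe_mul, WithZero.coe_inj] at hr2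
      have := congrArg Multiplicative.toAdd hr2
      simpa using this
    -- recurse with m = u.toAdd
    have hm : u.toAdd.toNat < n ∧ 0 < u.toAdd.toNat := by
      constructor
      · omega
      · omega
    refine ih u.toAdd.toNat hm.1 r hrm ?_ hm.2
    rw [← hu, WithZero.coe_inj]
    apply Multiplicative.toAdd.injective
    simp only [toAdd_ofAdd]
    omega

private lemma mem_max_le_one (F : Type*) [Field F] (T : Subring F)
    [IsDiscreteValuationRing T]
    [IsAdicComplete (IsLocalRing.maximalIdeal T) T]
    (v : Valuation F (WithZero (Multiplicative ℤ))) :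
    ∀ a : T, a ∈ IsLocalRing.maximalIdeal T → v (a : F) ≤ 1 := by
  intro a ha
  by_contra h
  push_neg at h
  have hne : v ((a : F)) ≠ 0 := ne_of_gt (lt_trans zero_lt_one h)
  obtain ⟨u, hu⟩ := WithZero.ne_zero_iff_exists.mp hne
  have hupos : 0 < u.toAdd := by
    rw [← hu, show (1 : WithZero (Multiplicative ℤ)) = ((1 : Multiplicative ℤ) : WithZero _)
      by rfl, WithZero.coe_lt_coe] at h
    have := Multiplicative.toAdd_lt.mpr h
    simpa using this
  refine descent F T v u.toAdd.toNat a ha ?_ (by omega)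
  rw [← hu, WithZero.coe_inj]
  apply Multiplicative.toAdd.injective
  simp only [toAdd_ofAdd]
  omega

theorem stmt_4 (F : Type*) [Field F] (T : Subring F)
    [IsDiscreteValuationRing T]
    [IsAdicComplete (IsLocalRing.maximalIdeal T) T]
    (v : Valuation F (WithZero (Multiplicative ℤ)))
    (hv : Function.Surjective v) :
    ∀ x : F, x ∈ T → x ∈ v.integer := by
  intro x hx
  lift x to T using hx with t
  show v ((t : F)) ≤ 1
  by_contra h
  push_neg at h
  obtain ⟨π, hπ⟩ := IsDiscreteValuationRing.exists_irreducible T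
  have hπm : π ∈ IsLocalRing.maximalIdeal T := by
    rw [IsLocalRing.mem_maximalIdeal]
    exact hπ.not_isUnit
  have hπ0 : (π : F) ≠ 0 := by
    simpa using hπ.ne_zero
  have hvπ : v ((π : F)) ≠ 0 := by
    simpa using hπ0
  obtain ⟨p, hp⟩ := WithZero.ne_zero_iff_exists.mp hvπ
  have hne : v ((t : F)) ≠ 0 := ne_of_gt (lt_trans zero_lt_one h)
  obtain ⟨u, hu⟩ := WithZero.ne_zero_iff_exists.mp hne
  have hupos : 0 < u.toAdd := by
    rw [← hu, show (1 : WithZero (Multiplicative ℤ)) = ((1 : Multiplicative ℤ) : WithZero _)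
      by rfl, WithZero.coe_lt_coe] at h
    have := Multiplicative.toAdd_lt.mpr h
    simpa using this
  -- for every n, t^n * π ∈ maximal ideal, so v(t)^n * v(π) ≤ 1
  have key : ∀ n : ℕ, (n : ℤ) * u.toAdd + p.toAdd ≤ 0 := by
    intro n
    have hmem : t ^ n * π ∈ IsLocalRing.maximalIdeal T :=
      Ideal.mul_mem_left _ _ hπm
    have := mem_max_le_one F T v (t ^ n * π) hmem
    have hval : v (((t ^ n * π : T) : F)) = (u : WithZero (Multiplicative ℤ)) ^ n * p := by
      push_cast
      rw [Valuation.map_mul, Valuation.map_pow, ← hu, ← hp]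
    rw [hval] at this
    rw [← WithZero.coe_pow, ← WithZero.coe_mul,
      show (1 : WithZero (Multiplicative ℤ)) = ((1 : Multiplicative ℤ) : WithZero _) by rfl,
      WithZero.coe_le_coe] at this
    have := Multiplicative.toAdd_le.mpr this
    simpa using this
  have h1 := key ((-p.toAdd).toNat + 1)
  have h2 : ((((-p.toAdd).toNat + 1 : ℕ)) : ℤ) ≤ (((-p.toAdd).toNat + 1 : ℕ) : ℤ) * u.toAdd :=
    le_mul_of_one_le_right (by positivity) (by omega)
  omega
end

section
/- Let R be a Noetherian local ring with maximal ideal m, and let f, t ∈ m be elements such that m is the radical of the ideal (f, t). Assume that for every n ≥ 1 the quotient ring R/(fⁿ) is t-adically complete. Then the canonical ring homomorphism from the m-adic completion of R to the (f)-adic completion of R is an isomorphism; in particular, the (f)-adic completion of R is m-adically complete. -/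
set_option maxHeartbeats 1000000
set_option synthInstance.maxHeartbeats 400000


/-!
STATEMENT 6: Let R be a Noetherian local ring with maximal ideal m, and let f, t ∈ m be
elements such that m is the radical of the ideal (f, t).  Assume that for every n ≥ 1 the
quotient ring R/(fⁿ) is t-adically complete.  Then the canonical ring homomorphism between
the (f)-adic completion of R and the m-adic completion of R (induced by the identity map
of R, which is continuous between the two adic topologies since (f) ⊆ m) is an
isomorphism; in particular, the (f)-adic completion of R is m-adically complete.

We realize the I-adic completion of R concretely as the subring of compatible sequences
in `∀ n, R ⧸ I ^ n` (the inverse limit of the rings R/Iⁿ).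
-/

/-- The `I`-adic completion of `R`, realized as the subring of compatible sequences in
`∀ n, R ⧸ I ^ n` (the inverse limit of the rings `R ⧸ I ^ n`). -/
def adicCompletionSubring {R : Type*} [CommRing R] (I : Ideal R) :
    Subring (∀ n : ℕ, R ⧸ I ^ n) where
  carrier := {x | ∀ n : ℕ,
    Ideal.Quotient.factor (S := I ^ (n + 1)) (T := I ^ n) (Ideal.pow_le_pow_right (Nat.le_succ n))
      (x (n + 1)) = x n}
  zero_mem' := fun n => by simp
  one_mem' := fun n => by simp
  add_mem' := fun hx hy n => by
    simp only [Pi.add_apply, map_add]; rw [hx n, hy n]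
  neg_mem' := fun hx n => by
    simp only [Pi.neg_apply, map_neg]; rw [hx n]
  mul_mem' := fun hx hy n => by
    simp only [Pi.mul_apply, map_mul]; rw [hx n, hy n]

/-- The canonical ring homomorphism `R → lim_n R/Iⁿ` into the `I`-adic completion. -/
def toAdicCompletionSubring {R : Type*} [CommRing R] (I : Ideal R) :
    R →+* adicCompletionSubring I where
  toFun r := ⟨fun n => Ideal.Quotient.mk (I ^ n) r,
    fun n => by rw [Ideal.Quotient.factor_mk]⟩
  map_one' := rfl
  map_mul' x y := rfl
  map_zero' := rfl
  map_add' x y := rfl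

/-- For ideals `I ≤ J`, the canonical ring homomorphism from the `I`-adic completion to the
`J`-adic completion, induced by the identity map of `R` (which is continuous between the
two adic topologies), given componentwise by the canonical maps `R/Iⁿ → R/Jⁿ`. -/
def adicCompletionSubringMap {R : Type*} [CommRing R] {I J : Ideal R} (h : I ≤ J) :
    adicCompletionSubring I →+* adicCompletionSubring J where
  toFun x := ⟨fun n => Ideal.Quotient.factor (S := I ^ n) (T := J ^ n) (Ideal.pow_right_mono h n) (x.1 n),
    fun n => by
      obtain ⟨r, hr⟩ := Ideal.Quotient.mk_surjective (x.1 (n + 1))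
      have h1 := x.2 n
      rw [← hr] at h1
      rw [Ideal.Quotient.factor_mk] at h1
      show Ideal.Quotient.factor _ (Ideal.Quotient.factor _ (x.1 (n + 1))) =
        Ideal.Quotient.factor _ (x.1 n)
      rw [← hr, ← h1, Ideal.Quotient.factor_mk, Ideal.Quotient.factor_mk,
        Ideal.Quotient.factor_mk]⟩
  map_one' := Subtype.ext (funext fun n => map_one (Ideal.Quotient.factor _))
  map_mul' x y := Subtype.ext (funext fun n => map_mul (Ideal.Quotient.factor _) _ _)
  map_zero' := Subtype.ext (funext fun n => map_zero (Ideal.Quotient.factor _))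
  map_add' x y := Subtype.ext (funext fun n => map_add (Ideal.Quotient.factor _) _ _)


namespace StmtSixAux

variable {R : Type*} [CommRing R]

theorem factor_apply_le {I : Ideal R} (x : adicCompletionSubring I) {n n' : ℕ} (h : n ≤ n') :
    Ideal.Quotient.factor (S := I ^ n') (T := I ^ n) (Ideal.pow_le_pow_right h) (x.1 n') = x.1 n := by
  induction n', h using Nat.le_induction with
  | base =>
      obtain ⟨r, hr⟩ := Ideal.Quotient.mk_surjective (x.1 n)
      rw [← hr, Ideal.Quotient.factor_mk]
  | succ n' h ih =>
      obtain ⟨r, hr⟩ := Ideal.Quotient.mk_surjective (x.1 (n' + 1))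
      have h2 := x.2 n'
      rw [← hr, Ideal.Quotient.factor_mk] at h2
      rw [← ih, ← h2, ← hr, Ideal.Quotient.factor_mk, Ideal.Quotient.factor_mk]

theorem exists_lift {I : Ideal R} (x : adicCompletionSubring I) :
    ∃ r : ℕ → R, (∀ n, Ideal.Quotient.mk (I ^ n) (r n) = x.1 n) ∧
      ∀ ⦃n n'⦄, n ≤ n' → r n' - r n ∈ I ^ n := by
  choose r hr using fun n => Ideal.Quotient.mk_surjective (x.1 n)
  refine ⟨r, hr, fun n n' h => ?_⟩
  have h2 := factor_apply_le x h
  rw [← hr n', Ideal.Quotient.factor_mk, ← hr n, Ideal.Quotient.eq] at h2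
  exact h2

theorem mk_mem (I : Ideal R) (r : ℕ → R) (hr : ∀ n, r (n + 1) - r n ∈ I ^ n) :
    (fun n => Ideal.Quotient.mk (I ^ n) (r n)) ∈ adicCompletionSubring I := by
  intro n
  show Ideal.Quotient.factor _ (Ideal.Quotient.mk (I ^ (n + 1)) (r (n + 1)))
      = Ideal.Quotient.mk (I ^ n) (r n)
  rw [Ideal.Quotient.factor_mk, Ideal.Quotient.eq]
  exact hr n

theorem quot_zero_level (I : Ideal R) (a b : R ⧸ I ^ 0) : a = b := by
  obtain ⟨x, rfl⟩ := Ideal.Quotient.mk_surjective a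
  obtain ⟨y, rfl⟩ := Ideal.Quotient.mk_surjective b
  rw [Ideal.Quotient.eq, pow_zero, Ideal.one_eq_top]
  exact Submodule.mem_top

/-- The component ring homomorphism from the `I`-adic completion to `R ⧸ J ^ n`. -/
def componentHom {I J : Ideal R} (h : I ≤ J) (n : ℕ) :
    adicCompletionSubring I →+* R ⧸ J ^ n :=
  (Ideal.Quotient.factor (S := I ^ n) (T := J ^ n) (Ideal.pow_right_mono h n)).comp
    ((Pi.evalRingHom (fun j => R ⧸ I ^ j) n).comp (adicCompletionSubring I).subtype)

theorem componentHom_apply {I J : Ideal R} (h : I ≤ J) (n : ℕ) (x : adicCompletionSubring I) :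
    componentHom h n x = (adicCompletionSubringMap h x).1 n := rfl

theorem componentHom_mk {I J : Ideal R} (h : I ≤ J) (n : ℕ) (x : adicCompletionSubring I)
    (r : R) (hr : Ideal.Quotient.mk (I ^ n) r = x.1 n) :
    componentHom h n x = Ideal.Quotient.mk (J ^ n) r := by
  show Ideal.Quotient.factor (S := I ^ n) (T := J ^ n) (Ideal.pow_right_mono h n) (x.1 n) = _
  rw [← hr, Ideal.Quotient.factor_mk]

theorem componentHom_toAdic {I J : Ideal R} (h : I ≤ J) (n : ℕ) (r : R) :
    componentHom h n (toAdicCompletionSubring I r) = Ideal.Quotient.mk (J ^ n) r :=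
  componentHom_mk h n _ r rfl

/-- Evaluation of the completion at level `ℓ`. -/
def evalHom (I : Ideal R) (ℓ : ℕ) : adicCompletionSubring I →+* R ⧸ I ^ ℓ :=
  (Pi.evalRingHom (fun j => R ⧸ I ^ j) ℓ).comp (adicCompletionSubring I).subtype

/-- The key algebraic lemma (cf. Stacks 05GG): if `N` is a finitely generated ideal
containing `f ^ n₀`, and `a` is an element of the `(f)`-adic completion admitting a
coherent system of lifts `r j` with `r n₀ ∈ N`, then `a` lies in the extension of `N`
to the completion. -/
theorem mem_map_of_lift (f : R) (N : Ideal R) (hN : N.FG)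
    (n₀ : ℕ) (hfN : f ^ n₀ ∈ N) (a : adicCompletionSubring (Ideal.span {f}))
    (r : ℕ → R) (hr : ∀ j, Ideal.Quotient.mk (Ideal.span {f} ^ j) (r j) = a.1 j)
    (hrc : ∀ ⦃j j'⦄, j ≤ j' → r j' - r j ∈ Ideal.span {f} ^ j)
    (hrn : r n₀ ∈ N) :
    a ∈ Ideal.map (toAdicCompletionSubring (Ideal.span {f})) N := by
  classical
  obtain ⟨G, hG⟩ := hN
  have hyj : ∀ j : ℕ, ∃ u : R, u * f ^ (n₀ + j) = r (n₀ + j + 1) - r (n₀ + j) := by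
    intro j
    have h1 : r (n₀ + j + 1) - r (n₀ + j) ∈ Ideal.span {f} ^ (n₀ + j) := hrc (Nat.le_succ _)
    rwa [Ideal.span_singleton_pow, Ideal.mem_span_singleton'] at h1
  choose u hu using hyj
  obtain ⟨v, hv⟩ : ∃ v : R → R, ∑ g ∈ G, v g • g = r n₀ :=
    by obtain ⟨v, -, hv⟩ := Submodule.mem_span_finset.mp (by show _ ∈ Ideal.span (G : Set R); rw [hG]; exact hrn); exact ⟨v, hv⟩
  obtain ⟨d, hd⟩ : ∃ d : R → R, ∑ g ∈ G, d g • g = f ^ n₀ :=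
    by obtain ⟨d, -, hd⟩ := Submodule.mem_span_finset.mp (by show _ ∈ Ideal.span (G : Set R); rw [hG]; exact hfN); exact ⟨d, hd⟩
  set w : R → ℕ → R := fun g ℓ => v g + ∑ j ∈ Finset.range ℓ, u j * f ^ j * d g with hw
  have hsum : ∀ ℓ, ∑ g ∈ G, w g ℓ * g = r (n₀ + ℓ) := by
    intro ℓ
    induction ℓ with
    | zero =>
        simp only [hw, Finset.range_zero, Finset.sum_empty, add_zero, Nat.add_zero]
        rw [← hv]
        exact Finset.sum_congr rfl fun g _ => by rw [smul_eq_mul]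
    | succ ℓ ih =>
        have e1 : ∀ g ∈ G, w g (ℓ + 1) * g = w g ℓ * g + u ℓ * f ^ ℓ * (d g • g) := by
          intro g _
          simp only [hw, Finset.sum_range_succ, smul_eq_mul]
          ring
        calc ∑ g ∈ G, w g (ℓ + 1) * g
            = ∑ g ∈ G, (w g ℓ * g + u ℓ * f ^ ℓ * (d g • g)) := Finset.sum_congr rfl e1
          _ = (∑ g ∈ G, w g ℓ * g) + u ℓ * f ^ ℓ * ∑ g ∈ G, d g • g := by
              rw [Finset.sum_add_distrib, Finset.mul_sum]
          _ = r (n₀ + ℓ) + u ℓ * f ^ (n₀ + ℓ) := by rw [ih, hd, mul_assoc, ← pow_add, Nat.add_comm ℓ n₀]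
          _ = r (n₀ + (ℓ + 1)) := by rw [hu ℓ]; ring
  have hfI : f ∈ Ideal.span {f} := Ideal.subset_span rfl
  have hz : ∀ g : R, (fun ℓ => Ideal.Quotient.mk (Ideal.span {f} ^ ℓ) (w g ℓ))
      ∈ adicCompletionSubring (Ideal.span {f}) := by
    intro g
    apply mk_mem
    intro ℓ
    have e2 : w g (ℓ + 1) - w g ℓ = u ℓ * f ^ ℓ * d g := by
      simp only [hw, Finset.sum_range_succ]
      ring
    rw [e2]
    exact Ideal.mul_mem_right _ _ (Ideal.mul_mem_left _ _ (Ideal.pow_mem_pow hfI ℓ))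
  set z : R → adicCompletionSubring (Ideal.span {f}) := fun g => ⟨_, hz g⟩ with hzdef
  have key : a = ∑ g ∈ G, toAdicCompletionSubring (Ideal.span {f}) g * z g := by
    apply Subtype.ext
    funext ℓ
    show evalHom (Ideal.span {f}) ℓ a
      = evalHom (Ideal.span {f}) ℓ (∑ g ∈ G, toAdicCompletionSubring (Ideal.span {f}) g * z g)
    rw [map_sum]
    have e3 : ∀ g ∈ G, evalHom (Ideal.span {f}) ℓ (toAdicCompletionSubring (Ideal.span {f}) g * z g)
        = Ideal.Quotient.mk (Ideal.span {f} ^ ℓ) (w g ℓ * g) := by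
      intro g _
      rw [map_mul]
      show Ideal.Quotient.mk (Ideal.span {f} ^ ℓ) g
          * Ideal.Quotient.mk (Ideal.span {f} ^ ℓ) (w g ℓ) = _
      rw [← map_mul, mul_comm]
    rw [Finset.sum_congr rfl e3, ← map_sum, hsum ℓ]
    show a.1 ℓ = _
    rw [← hr ℓ, Ideal.Quotient.eq]
    have h4 := Submodule.neg_mem _ (hrc (Nat.le_add_left ℓ n₀))
    rwa [neg_sub] at h4
  rw [key]
  refine Ideal.sum_mem _ fun g hg => Ideal.mul_mem_right _ _ (Ideal.mem_map_of_mem _ ?_)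
  rw [← hG]
  exact Ideal.subset_span hg

end StmtSixAux

open StmtSixAux in
theorem stmt_6 (R : Type*) [CommRing R] [IsNoetherianRing R] [IsLocalRing R]
    (f t : R) (hf : f ∈ IsLocalRing.maximalIdeal R) (ht : t ∈ IsLocalRing.maximalIdeal R)
    (hrad : (Ideal.span {f, t}).radical = IsLocalRing.maximalIdeal R)
    (hcompl : ∀ n : ℕ, 1 ≤ n →
      IsAdicComplete (Ideal.span {Ideal.Quotient.mk (Ideal.span {f} ^ n) t})
        (R ⧸ Ideal.span {f} ^ n))
    (hfm : Ideal.span {f} ≤ IsLocalRing.maximalIdeal R) :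
    -- the canonical homomorphism between the (f)-adic and the m-adic completions of R
    -- is an isomorphism, ...
    Function.Bijective (adicCompletionSubringMap hfm) ∧
    -- ... and in particular the (f)-adic completion of R is m-adically complete.
    IsAdicComplete
      (Ideal.map (toAdicCompletionSubring (Ideal.span {f})) (IsLocalRing.maximalIdeal R))
      (adicCompletionSubring (Ideal.span {f})) := by
  classical
  obtain ⟨k₀, hk₀⟩ := Ideal.exists_radical_pow_le_of_fg (Ideal.span {f, t})
    (by rw [hrad]; exact IsNoetherian.noetherian _)
  rw [hrad] at hk₀
  set m : Ideal R := IsLocalRing.maximalIdeal R with hmdef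
  set I : Ideal R := Ideal.span {f} with hIdef
  set T : Ideal R := Ideal.span {t} with hTdef
  set k : ℕ := k₀ + 1 with hkdef
  have hk : m ^ k ≤ Ideal.span {f, t} := le_trans (Ideal.pow_le_pow_right (Nat.le_succ k₀)) hk₀
  have hsplit : Ideal.span {f, t} = I ⊔ T := Ideal.span_insert f {t}
  set c : ℕ → ℕ → ℕ := fun n i => k * (2 * max n i) with hcdef
  have hkey : ∀ n i : ℕ, m ^ c n i ≤ I ^ n ⊔ T ^ i := by
    intro n i
    calc m ^ (k * (2 * max n i)) = (m ^ k) ^ (2 * max n i) := by rw [pow_mul]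
      _ ≤ (I ⊔ T) ^ (2 * max n i) := Ideal.pow_right_mono (hsplit ▸ hk) _
      _ = (I ⊔ T) ^ (max n i + max n i) := by rw [two_mul]
      _ ≤ I ^ max n i ⊔ T ^ max n i := Ideal.sup_pow_add_le_pow_sup_pow
      _ ≤ I ^ n ⊔ T ^ i := sup_le_sup (Ideal.pow_le_pow_right (le_max_left n i))
          (Ideal.pow_le_pow_right (le_max_right n i))
  have hcge : ∀ n i, n ≤ c n i := by
    intro n i
    have h1 : n ≤ max n i := le_max_left n i
    have h2 : 1 ≤ k := by omega
    calc n ≤ 2 * max n i := by omega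
      _ ≤ k * (2 * max n i) := Nat.le_mul_of_pos_left _ (by omega)
  have hcmono : ∀ {n n' i i' : ℕ}, n ≤ n' → i ≤ i' → c n i ≤ c n' i' := by
    intro n n' i i' h1 h2
    exact Nat.mul_le_mul_left k (Nat.mul_le_mul_left 2 (max_le_max h1 h2))
  have hTbar : ∀ n j : ℕ, (Ideal.span {Ideal.Quotient.mk (I ^ n) t}) ^ j
      = Ideal.map (Ideal.Quotient.mk (I ^ n)) (T ^ j) := by
    intro n j
    rw [show T ^ j = Ideal.span {t ^ j} from by rw [hTdef, Ideal.span_singleton_pow],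
      Ideal.map_span, Set.image_singleton, map_pow, ← Ideal.span_singleton_pow]
  have hmem_bar : ∀ (n j : ℕ) (r : R), r ∈ I ^ n ⊔ T ^ j →
      Ideal.Quotient.mk (I ^ n) r ∈ Ideal.map (Ideal.Quotient.mk (I ^ n)) (T ^ j) := by
    intro n j r hrmem
    obtain ⟨ax, haI, bx, hbT, hab⟩ := Submodule.mem_sup.mp hrmem
    have he : Ideal.Quotient.mk (I ^ n) r = Ideal.Quotient.mk (I ^ n) bx := by
      rw [← hab, map_add, Ideal.Quotient.eq_zero_iff_mem.mpr haI, zero_add]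
    rw [he]
    exact Ideal.mem_map_of_mem _ hbT
  have hmem_unbar : ∀ (n j : ℕ) (r : R),
      Ideal.Quotient.mk (I ^ n) r ∈ Ideal.map (Ideal.Quotient.mk (I ^ n)) (T ^ j) →
      r ∈ I ^ n ⊔ T ^ j := by
    intro n j r hrmem
    obtain ⟨sx, hsT, hsx⟩ :=
      (Ideal.mem_map_iff_of_surjective _ Ideal.Quotient.mk_surjective).mp hrmem
    have h1 : r - sx ∈ I ^ n := by
      rw [← Ideal.Quotient.eq] at *
      exact hsx.symm
    exact Submodule.mem_sup.mpr ⟨r - sx, h1, sx, hsT, by ring⟩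
  have hKH : ∀ n, 1 ≤ n → ∀ r : R, (∀ j, r ∈ I ^ n ⊔ T ^ j) → r ∈ I ^ n := by
    intro n hn r h
    have h0 := (hcompl n hn).toIsHausdorff.haus' (Ideal.Quotient.mk (I ^ n) r) ?_
    · exact Ideal.Quotient.eq_zero_iff_mem.mp h0
    · intro j
      rw [SModEq.zero, ← Ideal.one_eq_top, Ideal.smul_eq_mul, mul_one, hTbar n j]
      exact hmem_bar n j r (h j)
  have hKP : ∀ n, 1 ≤ n → ∀ s : ℕ → R, (∀ ⦃j j' : ℕ⦄, j ≤ j' → s j' - s j ∈ I ^ n ⊔ T ^ j) →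
      ∃ ρ : R, ∀ j, ρ - s j ∈ I ^ n ⊔ T ^ j := by
    intro n hn s hs
    have hcau : ∀ {j j' : ℕ}, j ≤ j' → Ideal.Quotient.mk (I ^ n) (s j)
        ≡ Ideal.Quotient.mk (I ^ n) (s j')
        [SMOD (Ideal.span {Ideal.Quotient.mk (I ^ n) t} ^ j • ⊤ :
          Submodule (R ⧸ I ^ n) (R ⧸ I ^ n))] := by
      intro j j' hjj'
      rw [SModEq.sub_mem, ← Ideal.one_eq_top, Ideal.smul_eq_mul, mul_one, hTbar n j, ← map_sub]
      apply hmem_bar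
      have h5 := Submodule.neg_mem _ (hs hjj')
      rwa [neg_sub] at h5
    obtain ⟨L, hL⟩ := (hcompl n hn).toIsPrecomplete.prec'
      (fun j => Ideal.Quotient.mk (I ^ n) (s j)) hcau
    obtain ⟨ρ, hρ⟩ := Ideal.Quotient.mk_surjective L
    refine ⟨ρ, fun j => ?_⟩
    have h2 := hL j
    rw [SModEq.sub_mem, ← Ideal.one_eq_top, Ideal.smul_eq_mul, mul_one, hTbar n j,
      ← hρ, ← map_sub] at h2
    have h3 := hmem_unbar n j (s j - ρ) h2
    have h4 := Submodule.neg_mem _ h3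
    rwa [neg_sub] at h4
  -- Injectivity
  have hinj : Function.Injective (adicCompletionSubringMap hfm) := by
    rw [injective_iff_map_eq_zero]
    intro x hx
    obtain ⟨r, hr, hrc⟩ := exists_lift x
    have hxm : ∀ N : ℕ, r N ∈ m ^ N := by
      intro N
      have h2 : Ideal.Quotient.factor (S := I ^ N) (T := m ^ N) (Ideal.pow_right_mono hfm N) (x.1 N)
          = 0 := by
        rw [show Ideal.Quotient.factor (S := I ^ N) (T := m ^ N) (Ideal.pow_right_mono hfm N) (x.1 N)
          = (adicCompletionSubringMap hfm x).1 N from rfl, hx]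
        rfl
      rw [← hr N, Ideal.Quotient.factor_mk] at h2
      exact Ideal.Quotient.eq_zero_iff_mem.mp h2
    apply Subtype.ext
    funext n
    show x.1 n = 0
    match n with
    | 0 => exact quot_zero_level I _ _
    | (n + 1) =>
      rw [← hr (n + 1), Ideal.Quotient.eq_zero_iff_mem]
      apply hKH (n + 1) (Nat.le_add_left 1 n)
      intro j
      have h1 : r (c (n + 1) j) ∈ I ^ (n + 1) ⊔ T ^ j := hkey (n + 1) j (hxm _)
      have h2 : r (c (n + 1) j) - r (n + 1) ∈ I ^ (n + 1) := hrc (hcge (n + 1) j)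
      have h3 : r (n + 1) = r (c (n + 1) j) - (r (c (n + 1) j) - r (n + 1)) := by ring
      rw [h3]
      exact Submodule.sub_mem _ h1 (Submodule.mem_sup_left h2)
  -- Surjectivity
  have hsurj : Function.Surjective (adicCompletionSubringMap hfm) := by
    intro y
    obtain ⟨s, hs, hsc⟩ := exists_lift y
    have hex : ∀ n, ∃ ρ : R, ∀ j, ρ - s (c n j) ∈ I ^ n ⊔ T ^ j := by
      intro n
      rcases Nat.eq_zero_or_pos n with rfl | hn
      · exact ⟨0, fun j => by
          rw [pow_zero, Ideal.one_eq_top]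
          exact Submodule.mem_sup_left Submodule.mem_top⟩
      · apply hKP n hn
        intro j j' hjj'
        exact hkey n j (hsc (hcmono le_rfl hjj'))
    choose ρ hρ using hex
    have hstep : ∀ n, ρ (n + 1) - ρ n ∈ I ^ n := by
      intro n
      rcases Nat.eq_zero_or_pos n with rfl | hn
      · rw [pow_zero, Ideal.one_eq_top]; exact Submodule.mem_top
      · apply hKH n hn
        intro j
        have h1 : ρ (n + 1) - s (c (n + 1) j) ∈ I ^ n ⊔ T ^ j :=
          (sup_le_sup_right (Ideal.pow_le_pow_right (Nat.le_succ n)) _ :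
            I ^ (n + 1) ⊔ T ^ j ≤ I ^ n ⊔ T ^ j) (hρ (n + 1) j)
        have h2 : s (c (n + 1) j) - s (c n j) ∈ I ^ n ⊔ T ^ j :=
          hkey n j (hsc (hcmono (Nat.le_succ n) le_rfl))
        have h3 : s (c n j) - ρ n ∈ I ^ n ⊔ T ^ j := by
          have h4 := Submodule.neg_mem _ (hρ n j)
          rwa [neg_sub] at h4
        have h4 : ρ (n + 1) - ρ n = (ρ (n + 1) - s (c (n + 1) j))
            + (s (c (n + 1) j) - s (c n j)) + (s (c n j) - ρ n) := by ring
        rw [h4]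
        exact Submodule.add_mem _ (Submodule.add_mem _ h1 h2) h3
    refine ⟨⟨fun n => Ideal.Quotient.mk (I ^ n) (ρ n), mk_mem I ρ hstep⟩, ?_⟩
    apply Subtype.ext
    funext n
    show Ideal.Quotient.factor (S := I ^ n) (T := m ^ n) (Ideal.pow_right_mono hfm n)
        (Ideal.Quotient.mk (I ^ n) (ρ n)) = y.1 n
    rw [Ideal.Quotient.factor_mk, ← hs n, Ideal.Quotient.eq]
    rcases Nat.eq_zero_or_pos n with rfl | hn
    · rw [pow_zero, Ideal.one_eq_top]; exact Submodule.mem_top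
    · have hIm : I ^ n ⊔ T ^ n ≤ m ^ n := sup_le (Ideal.pow_right_mono hfm n)
        (Ideal.pow_right_mono (by rw [hTdef, Ideal.span_le, Set.singleton_subset_iff]; exact ht) n)
      have h1 : ρ n - s (c n n) ∈ m ^ n := hIm (hρ n n)
      have h2 : s (c n n) - s n ∈ m ^ n := hsc (hcge n n)
      have h3 : ρ n - s n = (ρ n - s (c n n)) + (s (c n n) - s n) := by ring
      rw [h3]
      exact Submodule.add_mem _ h1 h2
  refine ⟨⟨hinj, hsurj⟩, ?_⟩
  -- Part 2: completeness
  set J : Ideal (adicCompletionSubring I) := Ideal.map (toAdicCompletionSubring I) m with hJdef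
  have hsmul : ∀ n : ℕ, (J ^ n • ⊤ :
      Submodule (adicCompletionSubring I) (adicCompletionSubring I)) = J ^ n := by
    intro n
    rw [← Ideal.one_eq_top, Ideal.smul_eq_mul, mul_one]
  have hP1 : ∀ (n : ℕ) (x : adicCompletionSubring I), x ∈ J ^ n → componentHom hfm n x = 0 := by
    intro n x hxmem
    have hJn : J ^ n = Ideal.map (toAdicCompletionSubring I) (m ^ n) := (Ideal.map_pow _ _ n).symm
    rw [hJn] at hxmem
    have hker : Ideal.map (toAdicCompletionSubring I) (m ^ n)
        ≤ RingHom.ker (componentHom hfm n) := by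
      rw [Ideal.map_le_iff_le_comap]
      intro r hrmem
      simp only [Ideal.mem_comap, RingHom.mem_ker]
      rw [componentHom_toAdic, Ideal.Quotient.eq_zero_iff_mem]
      exact hrmem
    exact RingHom.mem_ker.mp (hker hxmem)
  have hP2 : ∀ (n : ℕ) (x : adicCompletionSubring I), componentHom hfm n x = 0 → x ∈ J ^ n := by
    intro n x hx0
    obtain ⟨r, hr, hrc⟩ := exists_lift x
    rw [hJdef, ← Ideal.map_pow]
    apply mem_map_of_lift f (m ^ n) (IsNoetherian.noetherian _) n (Ideal.pow_mem_pow hf n)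
      x r hr hrc
    have h2 : Ideal.Quotient.mk (m ^ n) (r n) = 0 := by
      rw [← componentHom_mk hfm n x (r n) (hr n)]
      exact hx0
    exact Ideal.Quotient.eq_zero_iff_mem.mp h2
  refine { toIsHausdorff := ⟨?_⟩, toIsPrecomplete := ⟨?_⟩ }
  · intro x hx
    apply hinj
    rw [map_zero]
    apply Subtype.ext
    funext n
    show componentHom hfm n x = 0
    apply hP1 n x
    have h5 := hx n
    rwa [hsmul n, SModEq.zero] at h5
  · intro a ha
    have hbmem : (fun n => componentHom hfm n (a n)) ∈ adicCompletionSubring m := by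
      intro n
      show Ideal.Quotient.factor (S := m ^ (n + 1)) (T := m ^ n) (Ideal.pow_le_pow_right (Nat.le_succ n))
          (componentHom hfm (n + 1) (a (n + 1))) = componentHom hfm n (a n)
      have e1 : Ideal.Quotient.factor (S := m ^ (n + 1)) (T := m ^ n)
          (Ideal.pow_le_pow_right (Nat.le_succ n)) (componentHom hfm (n + 1) (a (n + 1)))
          = componentHom hfm n (a (n + 1)) := by
        rw [componentHom_apply, componentHom_apply]
        exact factor_apply_le (adicCompletionSubringMap hfm (a (n + 1))) (Nat.le_succ n)
      rw [e1, ← sub_eq_zero, ← map_sub]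
      apply hP1
      have h6 := ha (Nat.le_succ n)
      rw [hsmul n, SModEq.sub_mem] at h6
      have h7 := Submodule.neg_mem _ h6
      rwa [neg_sub] at h7
    obtain ⟨L, hL⟩ := hsurj ⟨fun n => componentHom hfm n (a n), hbmem⟩
    refine ⟨L, fun n => ?_⟩
    rw [hsmul n, SModEq.sub_mem]
    apply hP2
    rw [map_sub]
    have hc : (adicCompletionSubringMap hfm L).1 n = componentHom hfm n (a n) :=
      congrFun (congrArg Subtype.val hL) n
    rw [← componentHom_apply hfm n L] at hc
    rw [hc]
    exact sub_self _
end

section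
/- Let R be a Noetherian local domain of Krull dimension two that is complete with respect to its maximal ideal, whose maximal ideal is generated by two elements x and y (so R is a two-dimensional complete regular local ring), and whose residue field has characteristic different from 2. Let E be the fraction field of R, let v_y be the discrete valuation on E whose valuation ring is the localization of R at the height-one prime ideal (y) (the order of vanishing along y), and let E_y be the completion of E with respect to v_y. Let q = Σ_{i=1}^n a_i Z_i² be a diagonal quadratic form over E such that each coefficient a_i has the form a_i = x^{r_i} y^{s_i} u_i for some integers r_i, s_i ≥ 0 and some unit u_i ∈ R^×. If q is isotropic over E_y, then q is isotropic over E. -/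
open IsLocalRing Polynomial


/-!
STATEMENT 7: Let R be a two-dimensional complete regular local ring (a Noetherian local
domain of Krull dimension two, complete with respect to its maximal ideal, whose maximal
ideal is generated by two elements x and y) whose residue field has characteristic ≠ 2.
Let E = Frac R, let v_y be the discrete valuation on E whose valuation ring is the
localization of R at the height-one prime (y) (order of vanishing along y), and let E_y
be the completion of E with respect to v_y.  Let q = Σ aᵢ Zᵢ² be a diagonal quadratic
form over E with aᵢ = x^{rᵢ} y^{sᵢ} uᵢ, rᵢ, sᵢ ≥ 0, uᵢ ∈ R^×.  If q is isotropic over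
E_y then q is isotropic over E.

The valuation v_y is modelled as a surjective `ℤₘ₀`-valued valuation whose valuation ring
is R_{(y)} = {a/b : a, b ∈ R, b ∉ (y)} ⊆ E, and the completion E_y is modelled
axiomatically (a complete valued field extending (E, v_y) in which E is dense).
-/

/-- `(Fv, ι, w)` is the completion of the valued field `(F, v)`:  `w` extends `v` along
`ι`, the image of `F` is dense in `Fv`, and `Fv` is complete. -/
def IsValuationCompletion {F Fv : Type*} [Field F] [Field Fv]
    (v : Valuation F (WithZero (Multiplicative ℤ))) (ι : F →+* Fv)
    (w : Valuation Fv (WithZero (Multiplicative ℤ))) : Prop :=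
  (∀ a : F, w (ι a) = v a) ∧
  (∀ x : Fv, ∀ γ : WithZero (Multiplicative ℤ), γ ≠ 0 → ∃ a : F, w (x - ι a) < γ) ∧
  (∀ s : ℕ → Fv,
    (∀ γ : WithZero (Multiplicative ℤ), γ ≠ 0 →
      ∃ N : ℕ, ∀ m ≥ N, ∀ n ≥ N, w (s m - s n) < γ) →
    ∃ l : Fv, ∀ γ : WithZero (Multiplicative ℤ), γ ≠ 0 →
      ∃ N : ℕ, ∀ n ≥ N, w (l - s n) < γ)


lemma aux_dec {A : Type*} [CommRing A] [IsDomain A] [IsNoetherianRing A]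
    (g : A) (hg : Ideal.span {g} ≠ ⊤) {r : A} (hr : r ≠ 0) :
    ∃ (m : ℕ) (t : A), t ∉ Ideal.span {g} ∧ r = g ^ m * t := by
  classical
  have hex : ∃ m : ℕ, ¬ g ^ m ∣ r := by
    by_contra h
    push_neg at h
    apply hr
    have : r ∈ (⨅ m : ℕ, Ideal.span {g} ^ m) := by
      simp only [Ideal.mem_iInf]
      intro m
      rw [Ideal.span_singleton_pow, Ideal.mem_span_singleton]
      exact h m
    rwa [Ideal.iInf_pow_eq_bot_of_isDomain (I := Ideal.span {g}) hg, Ideal.mem_bot] at this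
  have hm₀ : ¬ g ^ (Nat.find hex) ∣ r := Nat.find_spec hex
  have hm₀0 : Nat.find hex ≠ 0 := by
    intro h; apply hm₀; rw [h, pow_zero]; exact one_dvd r
  have hdvd : g ^ (Nat.find hex - 1) ∣ r := by
    have := Nat.find_min hex (m := Nat.find hex - 1)
      (Nat.sub_lt (Nat.pos_of_ne_zero hm₀0) one_pos)
    simpa using this
  obtain ⟨t, ht⟩ := hdvd
  refine ⟨Nat.find hex - 1, t, ?_, ht⟩
  rw [Ideal.mem_span_singleton]
  rintro ⟨d, rfl⟩
  apply hm₀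
  refine ⟨d, ?_⟩
  calc r = g ^ (Nat.find hex - 1) * (g * d) := ht
    _ = g ^ (Nat.find hex - 1 + 1) * d := by ring
    _ = g ^ (Nat.find hex) * d := by rw [Nat.sub_add_cancel (Nat.pos_of_ne_zero hm₀0)]

lemma aux_not_principal {R : Type*} [CommRing R] [IsDomain R] [IsNoetherianRing R] [IsLocalRing R]
    (hdim : ringKrullDim R = 2) (g : R) (hg : IsLocalRing.maximalIdeal R = Ideal.span {g}) :
    False := by
  have hgtop : Ideal.span {g} ≠ ⊤ := hg ▸ (IsLocalRing.maximalIdeal.isMaximal R).ne_top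
  have hprime : ∀ P : Ideal R, P.IsPrime → P = ⊥ ∨ P = maximalIdeal R := by
    intro P hP
    by_cases h : P = ⊥
    · left; exact h
    · right
      obtain ⟨r, hrP, hr0⟩ := Submodule.exists_mem_ne_zero_of_ne_bot h
      obtain ⟨m, t, ht, rfl⟩ := aux_dec g hgtop hr0
      have htu : IsUnit t := by
        by_contra hnu
        exact ht (hg ▸ hnu)
      have hgm : g ^ m ∈ P := by
        obtain ⟨tu, rfl⟩ := htu
        have := P.mul_mem_right (((tu⁻¹ : Rˣ) : R)) hrP
        simpa [mul_assoc] using this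
      have hgP : g ∈ P := hP.mem_of_pow_mem m hgm
      refine le_antisymm (le_maximalIdeal hP.ne_top) ?_
      rw [hg, Ideal.span_le, Set.singleton_subset_iff]
      exact hgP
  have hle : ringKrullDim R ≤ 1 := by
    show Order.krullDim (PrimeSpectrum R) ≤ 1
    rw [Order.krullDim]
    apply iSup_le
    intro p
    have hlen : p.length ≤ 1 := by
      by_contra hl
      push_neg at hl
      have h01 : p.toFun ⟨1, by omega⟩ < p.toFun ⟨2, by omega⟩ := by
        apply p.strictMono
        simp [Fin.lt_def]
      have h00 : p.toFun ⟨0, by omega⟩ < p.toFun ⟨1, by omega⟩ := by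
        apply p.strictMono
        simp [Fin.lt_def]
      set P0 := p.toFun ⟨0, by omega⟩
      set P1 := p.toFun ⟨1, by omega⟩
      set P2 := p.toFun ⟨2, by omega⟩
      have h1 : P1.asIdeal ≠ ⊥ := by
        intro hb
        have : P0.asIdeal < P1.asIdeal := h00
        rw [hb] at this
        exact absurd this (by simp)
      have h2 : P2.asIdeal ≠ ⊥ := by
        intro hb
        have : P1.asIdeal < P2.asIdeal := h01
        rw [hb] at this
        exact absurd this (by simp)
      have e1 := (hprime P1.asIdeal P1.isPrime).resolve_left h1
      have e2 := (hprime P2.asIdeal P2.isPrime).resolve_left h2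
      have : P1.asIdeal < P2.asIdeal := h01
      rw [e1, e2] at this
      exact lt_irrefl _ this
    exact_mod_cast hlen
  rw [hdim] at hle
  norm_num at hle


lemma quot_springer {R : Type*} [CommRing R] [IsDomain R] [IsNoetherianRing R] [IsLocalRing R]
    (x y : R) (hxy : IsLocalRing.maximalIdeal R = Ideal.span {x, y})
    (hP : (Ideal.span {y} : Ideal R).IsPrime) (hx : x ∉ Ideal.span {y})
    {ι : Type*} [DecidableEq ι] (s : Finset ι) (ε : ι → ℕ) (hε : ∀ i ∈ s, ε i ≤ 1)
    (u : ι → Rˣ) (p : ι → R)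
    (hsum : (∑ i ∈ s, x ^ ε i * (u i : R) * p i ^ 2) ∈ Ideal.span {y})
    (j : ι) (hj : j ∈ s) (hjp : p j ∉ Ideal.span {y}) :
    ∃ (e : ℕ) (c : ι → R) (j' : ι), j' ∈ s ∧ ε j' = e ∧ c j' ∉ IsLocalRing.maximalIdeal R ∧
      (∑ i ∈ s.filter (fun i => ε i = e), (u i : R) * c i ^ 2) ∈ IsLocalRing.maximalIdeal R := by
  classical
  haveI := hP
  let mk : R →+* R ⧸ (Ideal.span {y} : Ideal R) := Ideal.Quotient.mk _
  set X := mk x with hX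
  have hX0 : X ≠ 0 := fun h => hx (Ideal.Quotient.eq_zero_iff_mem.mp h)
  have hmtop := (IsLocalRing.maximalIdeal.isMaximal R).ne_top
  -- membership transfer lemmas
  have fwd : ∀ z : R, z ∈ IsLocalRing.maximalIdeal R → mk z ∈ Ideal.span {X} := by
    intro z hz
    rw [hxy] at hz
    have := Ideal.mem_map_of_mem mk hz
    rw [Ideal.map_span] at this
    have hmky : mk y = 0 := Ideal.Quotient.eq_zero_iff_mem.mpr (Ideal.subset_span rfl)
    have himg : mk '' {x, y} = {X, 0} := by
      simp only [Set.image_insert_eq, Set.image_singleton, hmky, hX]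
    rw [himg] at this
    have hspan : Ideal.span ({X, 0} : Set (R ⧸ (Ideal.span {y} : Ideal R))) = Ideal.span {X} := by
      rw [Ideal.span_insert]
      simp only [Ideal.span_singleton_eq_bot.mpr rfl, sup_bot_eq]
    rwa [hspan] at this
  have bwd : ∀ z : R, mk z ∈ Ideal.span {X} → z ∈ IsLocalRing.maximalIdeal R := by
    intro z hz
    obtain ⟨t, ht⟩ := Ideal.mem_span_singleton.mp hz
    obtain ⟨t', rfl⟩ := Ideal.Quotient.mk_surjective t
    have hsub : z - x * t' ∈ Ideal.span {y} := by
      have : mk (z - x * t') = 0 := by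
        simp only [map_sub, map_mul, ht]
        ring
      exact Ideal.Quotient.eq_zero_iff_mem.mp this
    rw [hxy]
    have h1 : z - x * t' ∈ Ideal.span {x, y} :=
      Ideal.span_mono (Set.singleton_subset_iff.mpr (by simp)) hsub
    have h2 : x * t' ∈ Ideal.span {x, y} :=
      Ideal.mul_mem_right _ _ (Ideal.subset_span (by simp))
    simpa using add_mem h1 h2
  have hXtop : Ideal.span {X} ≠ ⊤ := by
    intro h
    apply hmtop
    rw [Ideal.eq_top_iff_one]
    apply bwd
    rw [h]
    exact Submodule.mem_top
  set Pb : ι → R ⧸ (Ideal.span {y} : Ideal R) := fun i => mk (p i) with hPb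
  have hS : (∑ i ∈ s, X ^ ε i * (mk (u i : R)) * Pb i ^ 2) = (0 : R ⧸ (Ideal.span {y} : Ideal R)) := by
    have h0 : mk (∑ i ∈ s, x ^ ε i * (u i : R) * p i ^ 2) = 0 :=
      Ideal.Quotient.eq_zero_iff_mem.mpr hsum
    rw [map_sum] at h0
    simpa [map_mul, map_pow] using h0
  have hdeci : ∀ i, Pb i ≠ 0 → ∃ (m : ℕ) (t : R ⧸ (Ideal.span {y} : Ideal R)),
      t ∉ Ideal.span {X} ∧ Pb i = X ^ m * t :=
    fun i hi => aux_dec X hXtop hi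
  choose! M tt hts hteq using hdeci
  have hPbj : Pb j ≠ 0 := fun h => hjp (Ideal.Quotient.eq_zero_iff_mem.mp h)
  have sne : (s.filter fun i => Pb i ≠ 0).Nonempty := ⟨j, by simp [hj, hPbj]⟩
  obtain ⟨i₀, hi₀mem, hi₀min⟩ := Finset.exists_min_image _ M sne
  rw [Finset.mem_filter] at hi₀mem
  obtain ⟨hi₀s, hi₀0⟩ := hi₀mem
  set cb : ι → R ⧸ (Ideal.span {y} : Ideal R) :=
    fun i => if Pb i ≠ 0 then X ^ (M i - M i₀) * tt i else 0 with hcb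
  have key : ∀ i ∈ s, Pb i = X ^ (M i₀) * cb i := by
    intro i hi
    by_cases h : Pb i ≠ 0
    · have hMle : M i₀ ≤ M i := hi₀min i (Finset.mem_filter.mpr ⟨hi, h⟩)
      simp only [hcb, if_pos h]
      rw [hteq i h, ← mul_assoc, ← pow_add]
      congr 2
      omega
    · push_neg at h
      simp [hcb, h]
  have hcbi₀ : cb i₀ ∉ Ideal.span {X} := by
    simp only [hcb, if_pos hi₀0, Nat.sub_self, pow_zero, one_mul]
    exact hts i₀ hi₀0
  have hS3 : (∑ i ∈ s, X ^ ε i * (mk (u i : R)) * cb i ^ 2) = 0 := by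
    have hS2 : X ^ (2 * M i₀) * (∑ i ∈ s, X ^ ε i * (mk (u i : R)) * cb i ^ 2) = 0 := by
      rw [Finset.mul_sum]
      rw [← hS]
      apply Finset.sum_congr rfl
      intro i hi
      rw [key i hi]
      ring
    rcases mul_eq_zero.mp hS2 with h | h
    · exact absurd h (pow_ne_zero _ hX0)
    · exact h
  -- common closing step
  have main : ∀ (e : ℕ) (i' : ι), i' ∈ s → ε i' = e → cb i' ∉ Ideal.span {X} →
      (∑ i ∈ s.filter (fun i => ε i = e), (mk (u i : R)) * cb i ^ 2) ∈ Ideal.span {X} →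
      ∃ (e : ℕ) (c : ι → R) (j' : ι), j' ∈ s ∧ ε j' = e ∧ c j' ∉ IsLocalRing.maximalIdeal R ∧
      (∑ i ∈ s.filter (fun i => ε i = e), (u i : R) * c i ^ 2) ∈ IsLocalRing.maximalIdeal R := by
    intro e i' hi's hi'e hi'cb hsum_e
    choose c hc using fun i => Ideal.Quotient.mk_surjective (cb i)
    refine ⟨e, c, i', hi's, hi'e, ?_, ?_⟩
    · intro hmem
      apply hi'cb
      rw [← hc i']
      exact fwd _ hmem
    · apply bwd
      have : mk (∑ i ∈ s.filter (fun i => ε i = e), (u i : R) * c i ^ 2)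
          = ∑ i ∈ s.filter (fun i => ε i = e), (mk (u i : R)) * cb i ^ 2 := by
        rw [map_sum]
        apply Finset.sum_congr rfl
        intro i _
        rw [map_mul, map_pow, hc i]
      rw [this]
      exact hsum_e
  by_cases hcase : ∃ i ∈ s, ε i = 0 ∧ cb i ∉ Ideal.span {X}
  · obtain ⟨i', hi's, hi'e, hi'cb⟩ := hcase
    apply main 0 i' hi's hi'e hi'cb
    have hsplit := Finset.sum_filter_add_sum_filter_not s (fun i => ε i = 0)
      (fun i => X ^ ε i * (mk (u i : R)) * cb i ^ 2)
    rw [hS3] at hsplit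
    have hA : (∑ i ∈ s.filter (fun i => ε i = 0), X ^ ε i * (mk (u i : R)) * cb i ^ 2)
        = ∑ i ∈ s.filter (fun i => ε i = 0), (mk (u i : R)) * cb i ^ 2 := by
      apply Finset.sum_congr rfl
      intro i hi
      rw [Finset.mem_filter] at hi
      rw [hi.2, pow_zero, one_mul]
    rw [hA] at hsplit
    have hB : (∑ i ∈ s.filter (fun i => ¬ ε i = 0), X ^ ε i * (mk (u i : R)) * cb i ^ 2)
        ∈ Ideal.span {X} := by
      apply Ideal.sum_mem
      intro i hi
      rw [Finset.mem_filter] at hi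
      have : ε i = 1 := by have := hε i hi.1; omega
      rw [this, pow_one, Ideal.mem_span_singleton]
      exact ⟨(mk (u i : R)) * cb i ^ 2, by ring⟩
    have : (∑ i ∈ s.filter (fun i => ε i = 0), (mk (u i : R)) * cb i ^ 2)
        = - ∑ i ∈ s.filter (fun i => ¬ ε i = 0), X ^ ε i * (mk (u i : R)) * cb i ^ 2 := by
      linear_combination hsplit
    rw [this]
    exact neg_mem hB
  · push_neg at hcase
    have hi₀e : ε i₀ = 1 := by
      have h1 := hε i₀ hi₀s
      rcases Nat.le_one_iff_eq_zero_or_eq_one.mp h1 with h | h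
      · exact absurd hcbi₀ (by simpa using hcase i₀ hi₀s h)
      · exact h
    apply main 1 i₀ hi₀s hi₀e hcbi₀
    have hsplit := Finset.sum_filter_add_sum_filter_not s (fun i => ε i = 1)
      (fun i => X ^ ε i * (mk (u i : R)) * cb i ^ 2)
    rw [hS3] at hsplit
    have hA : (∑ i ∈ s.filter (fun i => ε i = 1), X ^ ε i * (mk (u i : R)) * cb i ^ 2)
        = X * ∑ i ∈ s.filter (fun i => ε i = 1), (mk (u i : R)) * cb i ^ 2 := by
      rw [Finset.mul_sum]
      apply Finset.sum_congr rfl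
      intro i hi
      rw [Finset.mem_filter] at hi
      rw [hi.2, pow_one]
      ring
    rw [hA] at hsplit
    have hB : (∑ i ∈ s.filter (fun i => ¬ ε i = 1), X ^ ε i * (mk (u i : R)) * cb i ^ 2)
        ∈ Ideal.span {X ^ 2} := by
      apply Ideal.sum_mem
      intro i hi
      rw [Finset.mem_filter] at hi
      have hi0 : ε i = 0 := by have := hε i hi.1; omega
      have hcbX : cb i ∈ Ideal.span {X} := hcase i hi.1 hi0
      obtain ⟨d, hd⟩ := Ideal.mem_span_singleton.mp hcbX
      rw [Ideal.mem_span_singleton, hi0, pow_zero, one_mul, hd]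
      exact ⟨(mk (u i : R)) * d ^ 2, by ring⟩
    obtain ⟨D, hD⟩ := Ideal.mem_span_singleton.mp hB
    have hXS : X * (∑ i ∈ s.filter (fun i => ε i = 1), (mk (u i : R)) * cb i ^ 2)
        = X * (- (X * D)) := by
      have : X * (∑ i ∈ s.filter (fun i => ε i = 1), (mk (u i : R)) * cb i ^ 2)
          = - (X^2 * D) := by linear_combination hsplit - hD
      rw [this]; ring
    have := mul_left_cancel₀ hX0 hXS
    rw [this, Ideal.mem_span_singleton]
    exact ⟨-D, by ring⟩


lemma aux_hensel {R : Type*} [CommRing R] [IsLocalRing R]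
    [IsAdicComplete (IsLocalRing.maximalIdeal R) R]
    (hchar : ringChar (IsLocalRing.ResidueField R) ≠ 2)
    (u : Rˣ) (b C : R) (hb : b ∉ IsLocalRing.maximalIdeal R)
    (hmem : (u : R) * b ^ 2 + C ∈ IsLocalRing.maximalIdeal R) :
    ∃ α : R, α ≠ 0 ∧ (u : R) * α ^ 2 + C = 0 := by
  have hH : HenselianRing R (maximalIdeal R) := inferInstance
  set c₀ : R := ((u⁻¹ : Rˣ) : R) * C with hc₀
  set f : R[X] := X ^ 2 + Polynomial.C c₀ with hf
  have hmonic : f.Monic := Polynomial.monic_X_pow_add_C _ two_ne_zero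
  have heval : f.eval b ∈ maximalIdeal R := by
    have : f.eval b = ((u⁻¹ : Rˣ) : R) * ((u : R) * b ^ 2 + C) := by
      simp only [hf, hc₀, Polynomial.eval_add, Polynomial.eval_pow, Polynomial.eval_X,
        Polynomial.eval_C]
      have h1 : ((u⁻¹ : Rˣ) : R) * (u : R) = 1 := u.inv_mul
      calc b ^ 2 + ((u⁻¹ : Rˣ) : R) * C
          = (((u⁻¹ : Rˣ) : R) * (u : R)) * b ^ 2 + ((u⁻¹ : Rˣ) : R) * C := by rw [h1]; ring
        _ = ((u⁻¹ : Rˣ) : R) * ((u : R) * b ^ 2 + C) := by ring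
    rw [this]
    exact Ideal.mul_mem_left _ _ hmem
  have hderiv : IsUnit (Ideal.Quotient.mk (maximalIdeal R) (f.derivative.eval b)) := by
    have hd : f.derivative.eval b = 2 * b := by
      simp [hf, Polynomial.derivative_X_pow]
      ring
    rw [hd]
    have h2 : (residue R) 2 ≠ 0 := by
      intro h0
      have : ringChar (ResidueField R) ∣ 2 := by
        apply ringChar.dvd
        have : ((2 : ℕ) : ResidueField R) = residue R (2 : R) := by
          rw [map_ofNat (residue R) 2]
          norm_num
        rw [this, h0]
      rcases (Nat.dvd_prime Nat.prime_two).mp this with h | h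
      · exact CharP.ringChar_ne_one h
      · exact hchar h
    have hbne : residue R b ≠ 0 := by
      rw [ne_eq, residue_eq_zero_iff]
      exact hb
    have : (Ideal.Quotient.mk (maximalIdeal R)) (2 * b) = residue R 2 * residue R b := by
      rw [← map_mul]
      rfl
    rw [this]
    exact isUnit_iff_ne_zero.mpr (mul_ne_zero h2 hbne)
  obtain ⟨α, hroot, hsub⟩ := hH.is_henselian f hmonic b heval hderiv
  have hrootval : α ^ 2 + c₀ = 0 := by
    have := hroot
    simpa [hf, Polynomial.IsRoot, Polynomial.eval_add, Polynomial.eval_pow] using this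
  have hαm : α ∉ maximalIdeal R := by
    intro hα
    apply hb
    have : b = α - (α - b) := by ring
    rw [this]
    exact Submodule.sub_mem _ hα hsub
  refine ⟨α, ?_, ?_⟩
  · intro h0
    exact hαm (h0 ▸ (Submodule.zero_mem _))
  · have : (u : R) * (α ^ 2 + c₀) = 0 := by rw [hrootval, mul_zero]
    calc (u : R) * α ^ 2 + C = (u : R) * (α ^ 2 + c₀) := by
          rw [hc₀, mul_add, ← mul_assoc, u.mul_inv, one_mul]
      _ = 0 := this

theorem stmt_7 (R : Type*) [CommRing R] [IsDomain R] [IsNoetherianRing R] [IsLocalRing R]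
    [IsAdicComplete (IsLocalRing.maximalIdeal R) R]
    (x y : R) (hxy : IsLocalRing.maximalIdeal R = Ideal.span {x, y})
    (hdim : ringKrullDim R = 2)
    (hchar : ringChar (IsLocalRing.ResidueField R) ≠ 2)
    -- v is the discrete valuation on E = Frac R whose valuation ring is the localization
    -- of R at the height-one prime ideal (y)
    (v : Valuation (FractionRing R) (WithZero (Multiplicative ℤ)))
    (hv : Function.Surjective v)
    (hvring : ∀ e : FractionRing R, v e ≤ 1 ↔
      ∃ p q : R, q ∉ Ideal.span {y} ∧
        algebraMap R (FractionRing R) q * e = algebraMap R (FractionRing R) p)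
    -- E_y is the completion of E with respect to v
    (Ey : Type*) [Field Ey] (ι : FractionRing R →+* Ey)
    (w : Valuation Ey (WithZero (Multiplicative ℤ)))
    (hcompl : IsValuationCompletion v ι w)
    -- q = Σ aᵢ Zᵢ² is a diagonal quadratic form over E with aᵢ = x^{rᵢ} y^{sᵢ} uᵢ
    (n : ℕ) (a : Fin n → FractionRing R)
    (ha : ∀ i, ∃ (r s : ℕ) (u : Rˣ),
      a i = algebraMap R (FractionRing R) (x ^ r * y ^ s * (u : R)))
    -- if q is isotropic over E_y ...
    (hiso : ∃ z : Fin n → Ey, z ≠ 0 ∧ ∑ i, ι (a i) * z i ^ 2 = 0) :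
    -- ... then q is isotropic over E
    ∃ z : Fin n → FractionRing R, z ≠ 0 ∧ ∑ i, a i * z i ^ 2 = 0 := by
  classical
  obtain ⟨z0, hz0ne, hz0⟩ := hiso
  set φ : R →+* FractionRing R := (algebraMap R (FractionRing R) : R →+* FractionRing R)
    with hφdef
  have hφinj : Function.Injective φ := IsFractionRing.injective R (FractionRing R)
  have hφne : ∀ r : R, r ≠ 0 → φ r ≠ 0 := by
    intro r hr h
    exact hr (hφinj (by rw [h, map_zero]))
  have hιinj : Function.Injective ι := ι.injective
  have hιne : ∀ t : FractionRing R, t ≠ 0 → ι t ≠ 0 := by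
    intro t ht h
    exact ht (hιinj (by rw [h, map_zero]))
  -- basic ring facts
  have hymem : y ∈ IsLocalRing.maximalIdeal R := by
    rw [hxy]; exact Ideal.subset_span (by simp)
  have hytop : Ideal.span {y} ≠ ⊤ := by
    intro h
    apply (IsLocalRing.maximalIdeal.isMaximal R).ne_top
    rw [← top_le_iff, ← h]
    exact Ideal.span_le.mpr (Set.singleton_subset_iff.mpr hymem)
  have hxny : x ∉ Ideal.span {y} := by
    intro hxmem
    apply aux_not_principal hdim y
    rw [hxy]
    apply le_antisymm
    · rw [Ideal.span_le]
      rintro t (rfl | rfl)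
      · exact hxmem
      · exact Ideal.subset_span rfl
    · exact Ideal.span_mono (by simp)
  have hyne : y ≠ 0 := by
    intro h
    apply aux_not_principal hdim x
    rw [hxy, h, Ideal.span_insert, Ideal.span_singleton_eq_bot.mpr rfl, sup_bot_eq]
  have hxne : x ≠ 0 := fun h => hxny (h ▸ Ideal.zero_mem _)
  have hone : (1 : R) ∉ Ideal.span {y} := by
    intro h
    exact hytop ((Ideal.eq_top_iff_one _).mpr h)
  -- v facts
  have vR : ∀ r : R, v (φ r) ≤ 1 := by
    intro r
    rw [hvring]
    exact ⟨r, 1, hone, by rw [map_one, one_mul]⟩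
  have vUnit : ∀ r : R, r ∉ Ideal.span {y} → v (φ r) = 1 := by
    intro r hr
    have hr0 : r ≠ 0 := fun h => hr (h ▸ Ideal.zero_mem _)
    have hinv : v ((φ r)⁻¹) ≤ 1 := by
      rw [hvring]
      exact ⟨1, r, hr, by rw [mul_inv_cancel₀ (hφne r hr0), map_one]⟩
    have h1 : (1 : WithZero (Multiplicative ℤ)) = v (φ r) * v ((φ r)⁻¹) := by
      rw [← Valuation.map_mul, mul_inv_cancel₀ (hφne r hr0), Valuation.map_one]
    refine le_antisymm (vR r) ?_
    calc (1 : WithZero (Multiplicative ℤ)) = v (φ r) * v ((φ r)⁻¹) := h1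
      _ ≤ v (φ r) * 1 := mul_le_mul_right hinv _
      _ = v (φ r) := mul_one _
  set pi0 : WithZero (Multiplicative ℤ) := v (φ y) with hpi0def
  have hpi0ne : pi0 ≠ 0 := (Valuation.ne_zero_iff v).mpr (hφne y hyne)
  have hpi0pos : (0 : WithZero (Multiplicative ℤ)) < pi0 := zero_lt_iff.mpr hpi0ne
  have hpi0lt1 : pi0 < 1 := by
    rcases lt_or_eq_of_le (vR y) with h | h
    · exact h
    · exfalso
      have hinv : v ((φ y)⁻¹) ≤ 1 := by
        rw [Valuation.map_inv, h, inv_one]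
      obtain ⟨p, q, hq, heq⟩ := (hvring _).mp hinv
      apply hq
      have : φ q = φ (p * y) := by
        have := congrArg (fun t => t * φ y) heq
        rw [mul_assoc, inv_mul_cancel₀ (hφne y hyne), mul_one] at this
        rw [this, map_mul]
      rw [hφinj this]
      exact Ideal.mem_span_singleton.mpr ⟨p, mul_comm _ _⟩
  have hpi0le1 : pi0 ≤ 1 := le_of_lt hpi0lt1
  have vMemPow : ∀ (r : R) (k : ℕ), v (φ r) ≤ pi0 ^ k → y ^ k ∣ r := by
    intro r k hle
    rcases eq_or_ne r 0 with rfl | hr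
    · exact dvd_zero _
    obtain ⟨m, t, ht, rfl⟩ := aux_dec y hytop hr
    have hval : v (φ (y ^ m * t)) = pi0 ^ m := by
      rw [map_mul, map_pow, Valuation.map_mul, Valuation.map_pow, vUnit t ht, mul_one, hpi0def]
    rw [hval] at hle
    have hkm : k ≤ m := by
      by_contra hc
      push_neg at hc
      exact absurd hle (not_le.mpr (pow_lt_pow_right_of_lt_one₀ hpi0pos hpi0lt1 hc))
    exact dvd_mul_of_dvd_left (pow_dvd_pow y hkm) t
  have hyprime : (Ideal.span {y} : Ideal R).IsPrime := by
    rw [Ideal.span_singleton_prime hyne]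
    refine ⟨hyne, ?_, ?_⟩
    · intro h
      exact hytop (Ideal.span_singleton_eq_top.mpr h)
    · intro r t hrt
      by_contra hc
      push_neg at hc
      obtain ⟨hr, ht⟩ := hc
      have h1 : v (φ (r * t)) = 1 := by
        rw [map_mul, Valuation.map_mul,
          vUnit r (fun h => hr (Ideal.mem_span_singleton.mp h)),
          vUnit t (fun h => ht (Ideal.mem_span_singleton.mp h)), mul_one]
      obtain ⟨sdv, hsdv⟩ := hrt
      have h2 : v (φ (r * t)) ≤ pi0 := by
        rw [hsdv, map_mul, Valuation.map_mul, hpi0def]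
        calc v (φ y) * v (φ sdv) ≤ v (φ y) * 1 := mul_le_mul_right (vR sdv) _
          _ = v (φ y) := mul_one _
      rw [h1] at h2
      exact absurd (lt_of_le_of_lt h2 hpi0lt1) (lt_irrefl _)
  -- w facts
  obtain ⟨hwv, hdense, -⟩ := hcompl
  have wval : ∀ t : Ey, t ≠ 0 → ∃ aa : FractionRing R, aa ≠ 0 ∧ v aa = w t := by
    intro t ht
    have hwt : w t ≠ 0 := (Valuation.ne_zero_iff w).mpr ht
    obtain ⟨aa, haa⟩ := hdense t (w t) hwt
    refine ⟨aa, ?_, ?_⟩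
    · intro h0
      rw [h0, map_zero, sub_zero] at haa
      exact absurd haa (lt_irrefl _)
    · rw [← hwv]
      have : ι aa = t - (t - ι aa) := by ring
      rw [this]
      exact Valuation.map_sub_eq_of_lt_left w haa
  -- coefficients
  choose rr ss uu haeq using ha
  set ε : Fin n → ℕ := fun i => rr i % 2 with hεdef
  set dl : Fin n → ℕ := fun i => ss i % 2 with hdldef
  set b : Fin n → R := fun i => x ^ ε i * y ^ dl i * (uu i : R) with hbdef
  set d : Fin n → R := fun i => x ^ (rr i / 2) * y ^ (ss i / 2) with hddef
  have hdne : ∀ i, d i ≠ 0 := fun i =>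
    mul_ne_zero (pow_ne_zero _ hxne) (pow_ne_zero _ hyne)
  have habd : ∀ i, a i = φ (b i) * φ (d i) ^ 2 := by
    intro i
    rw [haeq i, ← map_pow, ← map_mul]
    congr 1
    have hx2 : ε i + rr i / 2 * 2 = rr i := Nat.mod_add_div' (rr i) 2
    have hy2 : dl i + ss i / 2 * 2 = ss i := Nat.mod_add_div' (ss i) 2
    calc x ^ rr i * y ^ ss i * (uu i : R)
        = x ^ (ε i + rr i / 2 * 2) * y ^ (dl i + ss i / 2 * 2) * (uu i : R) := by
          rw [hx2, hy2]
      _ = (x ^ ε i * y ^ dl i * (uu i : R)) * (x ^ (rr i / 2) * y ^ (ss i / 2)) ^ 2 := by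
          rw [pow_add, pow_add, mul_pow, ← pow_mul, ← pow_mul]
          ring
      _ = b i * d i ^ 2 := by rw [hbdef, hddef]
  -- move squares into z
  set z1 : Fin n → Ey := fun i => ι (φ (d i)) * z0 i with hz1def
  have hz1 : ∑ i, ι (φ (b i)) * z1 i ^ 2 = 0 := by
    rw [← hz0]
    apply Finset.sum_congr rfl
    intro i _
    rw [hz1def]
    simp only []
    rw [habd i, RingHom.map_mul ι (φ (b i)) (φ (d i) ^ 2), RingHom.map_pow ι (φ (d i)) 2]
    ring
  have hz1ne : ∃ i, z1 i ≠ 0 := by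
    obtain ⟨i, hi⟩ := Function.ne_iff.mp hz0ne
    refine ⟨i, ?_⟩
    rw [hz1def]
    exact mul_ne_zero (hιne _ (hφne (d i) (hdne i))) hi
  -- normalization
  set Tset : Finset (Fin n) := Finset.univ.filter (fun i => z1 i ≠ 0) with hTsetdef
  have hTne : Tset.Nonempty := by
    obtain ⟨i, hi⟩ := hz1ne
    exact ⟨i, by simp [hTsetdef, hi]⟩
  obtain ⟨j, hjT, hjmax⟩ := Finset.exists_max_image Tset (fun i => w (z1 i)) hTne
  have hz1j : z1 j ≠ 0 := by
    rw [hTsetdef] at hjT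
    exact (Finset.mem_filter.mp hjT).2
  obtain ⟨aa, haane, haav⟩ := wval (z1 j) hz1j
  have hMne : w (z1 j) ≠ 0 := (Valuation.ne_zero_iff w).mpr hz1j
  set ζ : Fin n → Ey := fun i => ι aa⁻¹ * z1 i with hζdef
  have hwζ : ∀ i, w (ζ i) = (w (z1 j))⁻¹ * w (z1 i) := by
    intro i
    rw [hζdef]
    simp only []
    rw [Valuation.map_mul, hwv, Valuation.map_inv, haav]
  have hζle : ∀ i, w (ζ i) ≤ 1 := by
    intro i
    by_cases hi : z1 i = 0
    · rw [hwζ i, hi, Valuation.map_zero, mul_zero]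
      exact zero_le_one
    · rw [hwζ i]
      calc (w (z1 j))⁻¹ * w (z1 i) ≤ (w (z1 j))⁻¹ * w (z1 j) := by
            apply mul_le_mul_right
            exact hjmax i (by simp [hTsetdef, hi])
        _ = 1 := inv_mul_cancel₀ hMne
  have hζj : w (ζ j) = 1 := by
    rw [hwζ j]
    exact inv_mul_cancel₀ hMne
  have hζsum : ∑ i, ι (φ (b i)) * ζ i ^ 2 = 0 := by
    have : ∑ i, ι (φ (b i)) * ζ i ^ 2 = ι aa⁻¹ ^ 2 * ∑ i, ι (φ (b i)) * z1 i ^ 2 := by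
      rw [Finset.mul_sum]
      apply Finset.sum_congr rfl
      intro i _
      rw [hζdef]
      ring
    rw [this, hz1, mul_zero]
  -- approximation
  have hpi3ne : pi0 ^ 3 ≠ 0 := pow_ne_zero _ hpi0ne
  have hpi3le1 : pi0 ^ 3 ≤ 1 := pow_le_one' hpi0le1 3
  have hpi3lt1 : pi0 ^ 3 < 1 := by
    calc pi0 ^ 3 ≤ pi0 := by
          calc pi0 ^ 3 = pi0 ^ 2 * pi0 := pow_succ pi0 2
            _ ≤ 1 * pi0 := mul_le_mul_left (pow_le_one' hpi0le1 2) _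
            _ = pi0 := one_mul _
      _ < 1 := hpi0lt1
  choose ee hee using fun i => hdense (ζ i) (pi0 ^ 3) hpi3ne
  have heele : ∀ i, v (ee i) ≤ 1 := by
    intro i
    rw [← hwv]
    have hrw : ι (ee i) = ζ i - (ζ i - ι (ee i)) := by ring
    rw [hrw]
    apply le_trans (Valuation.map_sub w _ _)
    apply max_le (hζle i)
    exact le_trans (le_of_lt (hee i)) hpi3le1
  have heej : v (ee j) = 1 := by
    rw [← hwv]
    have hrw : ι (ee j) = ζ j - (ζ j - ι (ee j)) := by ring
    have hlt : w (ζ j - ι (ee j)) < w (ζ j) := by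
      rw [hζj]
      exact lt_trans (hee j) hpi3lt1
    rw [hrw, Valuation.map_sub_eq_of_lt_left w hlt, hζj]
  -- the sum S over E is small
  set S : FractionRing R := ∑ i, φ (b i) * ee i ^ 2 with hSdef
  have hvS : v S ≤ pi0 ^ 2 := by
    have hιS : ι S = ∑ i, ι (φ (b i)) * ((ι (ee i) - ζ i) * (ι (ee i) + ζ i)) := by
      have h1 : ι S = ∑ i, ι (φ (b i)) * ι (ee i) ^ 2 := by
        rw [hSdef, map_sum]
        apply Finset.sum_congr rfl
        intro i _
        rw [map_mul, map_pow]
      rw [h1, ← sub_zero (∑ i, ι (φ (b i)) * ι (ee i) ^ 2), ← hζsum,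
        ← Finset.sum_sub_distrib]
      apply Finset.sum_congr rfl
      intro i _
      ring
    have hterm : ∀ i ∈ Finset.univ (α := Fin n),
        w (ι (φ (b i)) * ((ι (ee i) - ζ i) * (ι (ee i) + ζ i))) ≤ pi0 ^ 3 := by
      intro i _
      rw [Valuation.map_mul, Valuation.map_mul]
      have h1 : w (ι (φ (b i))) ≤ 1 := by rw [hwv]; exact vR (b i)
      have h2 : w (ι (ee i) - ζ i) ≤ pi0 ^ 3 := by
        rw [Valuation.map_sub_swap]
        exact le_of_lt (hee i)
      have h3 : w (ι (ee i) + ζ i) ≤ 1 := by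
        apply le_trans (Valuation.map_add w _ _)
        apply max_le _ (hζle i)
        rw [hwv]
        exact heele i
      calc w (ι (φ (b i))) * (w (ι (ee i) - ζ i) * w (ι (ee i) + ζ i))
          ≤ 1 * (pi0 ^ 3 * 1) := mul_le_mul' h1 (mul_le_mul' h2 h3)
        _ = pi0 ^ 3 := by rw [one_mul, mul_one]
    have : w (ι S) ≤ pi0 ^ 3 := by
      rw [hιS]
      exact Valuation.map_sum_le w hterm
    rw [hwv] at this
    apply le_trans this
    calc pi0 ^ 3 = pi0 ^ 2 * pi0 := pow_succ pi0 2
      _ ≤ pi0 ^ 2 * 1 := mul_le_mul_right hpi0le1 _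
      _ = pi0 ^ 2 := mul_one _
  -- common denominators
  choose pp qq hqq hpq using fun i => (hvring (ee i)).mp (heele i)
  set Qd : R := ∏ i, qq i with hQddef
  have hQdnot : Qd ∉ Ideal.span {y} := by
    intro h
    rw [hQddef] at h
    haveI := hyprime
    obtain ⟨i, -, hi⟩ := (Ideal.IsPrime.prod_mem_iff).mp h
    exact hqq i hi
  have hQdne : Qd ≠ 0 := fun h => hQdnot (h ▸ Ideal.zero_mem _)
  set P : Fin n → R := fun i => (∏ l ∈ Finset.univ.erase i, qq l) * pp i with hPdef
  have hφP : ∀ i, φ (P i) = φ Qd * ee i := by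
    intro i
    rw [hPdef]
    simp only []
    rw [map_mul, ← hpq i, ← mul_assoc, ← map_mul,
      Finset.prod_erase_mul _ _ (Finset.mem_univ i), ← hQddef]
  set T : R := ∑ i, b i * P i ^ 2 with hTdef
  have hφT : φ T = φ Qd ^ 2 * S := by
    rw [hTdef, map_sum, hSdef, Finset.mul_sum]
    apply Finset.sum_congr rfl
    intro i _
    rw [map_mul, map_pow, hφP i]
    ring
  have hvT : v (φ T) ≤ pi0 ^ 2 := by
    rw [hφT, Valuation.map_mul, Valuation.map_pow, vUnit Qd hQdnot, one_pow, one_mul]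
    exact hvS
  have hTdvd : y ^ 2 ∣ T := vMemPow T 2 hvT
  have hPj : P j ∉ Ideal.span {y} := by
    intro h
    obtain ⟨t, ht⟩ := Ideal.mem_span_singleton.mp h
    have h1 : v (φ (P j)) = 1 := by
      rw [hφP j, Valuation.map_mul, vUnit Qd hQdnot, heej, mul_one]
    have h2 : v (φ (P j)) ≤ pi0 := by
      rw [ht, map_mul, Valuation.map_mul]
      calc v (φ y) * v (φ t) ≤ v (φ y) * 1 := mul_le_mul_right (vR t) _
        _ = pi0 := by rw [mul_one, hpi0def]
    rw [h1] at h2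
    exact absurd (lt_of_le_of_lt h2 hpi0lt1) (lt_irrefl _)
  -- split T into the two residue classes mod y
  have hdl01 : ∀ i, ¬ dl i = 0 → dl i = 1 := by
    intro i h
    have h2 : ss i % 2 < 2 := Nat.mod_lt _ (by norm_num)
    have hd : dl i = ss i % 2 := rfl
    rw [hd] at h ⊢
    omega
  have hε01 : ∀ i, ε i ≤ 1 := by
    intro i
    have h2 : rr i % 2 < 2 := Nat.mod_lt _ (by norm_num)
    have hd : ε i = rr i % 2 := rfl
    rw [hd]
    omega
  set A : R := ∑ i ∈ Finset.univ.filter (fun i => dl i = 0),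
    x ^ ε i * (uu i : R) * P i ^ 2 with hAdef
  set B : R := ∑ i ∈ Finset.univ.filter (fun i => ¬ dl i = 0),
    x ^ ε i * (uu i : R) * P i ^ 2 with hBdef
  have hTAB : T = A + y * B := by
    rw [hTdef, ← Finset.sum_filter_add_sum_filter_not Finset.univ (fun i => dl i = 0)
      (fun i => b i * P i ^ 2), hAdef, hBdef, Finset.mul_sum]
    congr 1
    · apply Finset.sum_congr rfl
      intro i hi
      rw [Finset.mem_filter] at hi
      rw [hbdef]
      simp only []
      rw [hi.2, pow_zero]
      ring
    · apply Finset.sum_congr rfl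
      intro i hi
      rw [Finset.mem_filter] at hi
      rw [hbdef]
      simp only []
      rw [hdl01 i hi.2, pow_one]
      ring
  -- produce an isotropy witness for one residue class over R/(y)
  have key : ∃ (dv e : ℕ) (c : Fin n → R) (j' : Fin n), dl j' = dv ∧ ε j' = e ∧
      c j' ∉ IsLocalRing.maximalIdeal R ∧
      (∑ i ∈ (Finset.univ.filter (fun i => dl i = dv)).filter (fun i => ε i = e),
        (uu i : R) * c i ^ 2) ∈ IsLocalRing.maximalIdeal R := by
    by_cases hc : ∃ i, dl i = 0 ∧ P i ∉ Ideal.span {y}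
    · obtain ⟨i1, hi1dl, hi1P⟩ := hc
      have hA : A ∈ Ideal.span {y} := by
        have h1 : A = T - y * B := by rw [hTAB]; ring
        rw [h1]
        apply Submodule.sub_mem
        · obtain ⟨t2, ht2⟩ := hTdvd
          rw [ht2]
          exact Ideal.mem_span_singleton.mpr ⟨y * t2, by ring⟩
        · exact Ideal.mem_span_singleton.mpr ⟨B, rfl⟩
      obtain ⟨e, c, j', hj's, hj'e, hj'c, hj'sum⟩ :=
        quot_springer x y hxy hyprime hxny
          (Finset.univ.filter (fun i => dl i = 0)) ε (fun i _ => hε01 i) uu P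
          (by rw [← hAdef]; exact hA) i1 (by simp [hi1dl]) hi1P
      refine ⟨0, e, c, j', ?_, hj'e, hj'c, hj'sum⟩
      simpa using hj's
    · push_neg at hc
      have hdlj : dl j = 1 := by
        by_cases h : dl j = 0
        · exact absurd (hc j h) hPj
        · exact hdl01 j h
      have hAmem : A ∈ Ideal.span {y ^ 2} := by
        rw [hAdef]
        apply Ideal.sum_mem
        intro i hi
        rw [Finset.mem_filter] at hi
        obtain ⟨t, ht⟩ := Ideal.mem_span_singleton.mp (hc i hi.2)
        rw [Ideal.mem_span_singleton, ht]
        exact ⟨x ^ ε i * (uu i : R) * t ^ 2, by ring⟩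
      have hB : B ∈ Ideal.span {y} := by
        obtain ⟨sA, hsA⟩ := Ideal.mem_span_singleton.mp hAmem
        obtain ⟨t2, ht2⟩ := hTdvd
        have hyB : y * B = y * (y * (t2 - sA)) := by
          have : y * B = T - A := by rw [hTAB]; ring
          rw [this, ht2, hsA]
          ring
        have := mul_left_cancel₀ hyne hyB
        rw [Ideal.mem_span_singleton, this]
        exact ⟨t2 - sA, rfl⟩
      have hfiltereq : Finset.univ.filter (fun i : Fin n => ¬ dl i = 0)
          = Finset.univ.filter (fun i : Fin n => dl i = 1) := by
        apply Finset.filter_congr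
        intro i _
        constructor
        · intro h
          simp only [hdl01 i h]
        · intro h
          simp [h]
      obtain ⟨e, c, j', hj's, hj'e, hj'c, hj'sum⟩ :=
        quot_springer x y hxy hyprime hxny
          (Finset.univ.filter (fun i : Fin n => dl i = 1)) ε (fun i _ => hε01 i) uu P
          (by rw [← hfiltereq, ← hBdef]; exact hB) j (by simp [hdlj]) hPj
      refine ⟨1, e, c, j', ?_, hj'e, hj'c, hj'sum⟩
      have := Finset.mem_filter.mp hj's
      simpa using this.2
  obtain ⟨dv, e, c, j', hj'dl, hj'e, hj'c, hsumc⟩ := key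
  set K : Finset (Fin n) :=
    (Finset.univ.filter (fun i => dl i = dv)).filter (fun i => ε i = e) with hKdef
  have hj'K : j' ∈ K := by
    rw [hKdef]
    simp [hj'dl, hj'e]
  -- Hensel lifting
  set Cs : R := ∑ i ∈ K.erase j', (uu i : R) * c i ^ 2 with hCsdef
  have hCsmem : (uu j' : R) * c j' ^ 2 + Cs ∈ IsLocalRing.maximalIdeal R := by
    rw [hCsdef, Finset.add_sum_erase K (fun i => (uu i : R) * c i ^ 2) hj'K]
    exact hsumc
  obtain ⟨α, hα0, hαeq⟩ := aux_hensel hchar (uu j') (c j') Cs hj'c hCsmem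
  set c' : Fin n → R := Function.update c j' α with hc'def
  have hsum0 : ∑ i ∈ K, (uu i : R) * c' i ^ 2 = 0 := by
    rw [← Finset.add_sum_erase K (fun i => (uu i : R) * c' i ^ 2) hj'K]
    have h1 : c' j' = α := Function.update_self j' α c
    have h2 : ∑ i ∈ K.erase j', (uu i : R) * c' i ^ 2 = Cs := by
      rw [hCsdef]
      apply Finset.sum_congr rfl
      intro i hi
      rw [hc'def, Function.update_of_ne (Finset.ne_of_mem_erase hi) α c]
    rw [h1, h2]
    exact hαeq
  -- final isotropy witness over E
  set z : Fin n → FractionRing R := fun i =>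
    if i ∈ K then φ (c' i) * (φ (d i))⁻¹ else 0 with hzdef
  have hKprop : ∀ i ∈ K, dl i = dv ∧ ε i = e := by
    intro i hi
    rw [hKdef] at hi
    simp only [Finset.mem_filter, Finset.mem_univ, true_and] at hi
    exact hi
  have hterm : ∀ i ∈ K, a i * z i ^ 2 = φ x ^ e * φ y ^ dv * φ ((uu i : R) * c' i ^ 2) := by
    intro i hi
    obtain ⟨hidl, hiε⟩ := hKprop i hi
    have hφd : φ (d i) ≠ 0 := hφne (d i) (hdne i)
    have hbi : φ (b i) = φ x ^ e * φ y ^ dv * φ (uu i : R) := by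
      rw [hbdef]
      simp only []
      rw [map_mul, map_mul, map_pow, map_pow, hiε, hidl]
    calc a i * z i ^ 2
        = (φ (b i) * φ (d i) ^ 2) * (φ (c' i) * (φ (d i))⁻¹) ^ 2 := by
          rw [habd i, hzdef]
          simp only [if_pos hi]
      _ = φ (b i) * φ (c' i) ^ 2 * (φ (d i) ^ 2 * (φ (d i) ^ 2)⁻¹) := by
          rw [mul_pow, inv_pow]
          ring
      _ = φ (b i) * φ (c' i) ^ 2 := by
          rw [mul_inv_cancel₀ (pow_ne_zero 2 hφd), mul_one]
      _ = φ x ^ e * φ y ^ dv * φ ((uu i : R) * c' i ^ 2) := by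
          rw [hbi, map_mul, map_pow]
          ring
  refine ⟨z, ?_, ?_⟩
  · intro h
    have hzj' : z j' = 0 := congrFun h j'
    rw [hzdef] at hzj'
    simp only [if_pos hj'K] at hzj'
    have hc'j' : c' j' = α := Function.update_self j' α c
    rcases mul_eq_zero.mp hzj' with h1 | h1
    · rw [hc'j'] at h1
      exact hφne α hα0 h1
    · exact hφne (d j') (hdne j') (inv_eq_zero.mp h1)
  · have hzero : ∀ i ∈ Finset.univ (α := Fin n), i ∉ K → a i * z i ^ 2 = 0 := by
      intro i _ hiK
      rw [hzdef]
      simp only [if_neg hiK]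
      rw [zero_pow (by norm_num), mul_zero]
    calc ∑ i, a i * z i ^ 2 = ∑ i ∈ K, a i * z i ^ 2 :=
          (Finset.sum_subset (Finset.subset_univ K) hzero).symm
      _ = ∑ i ∈ K, φ x ^ e * φ y ^ dv * φ ((uu i : R) * c' i ^ 2) :=
          Finset.sum_congr rfl hterm
      _ = φ x ^ e * φ y ^ dv * φ (∑ i ∈ K, (uu i : R) * c' i ^ 2) := by
          rw [map_sum, Finset.mul_sum]
      _ = 0 := by rw [hsum0, map_zero, mul_zero]
end
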